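/- arXiv:2004.14434 — 4 statements merged into one kernel-verified Lean document; each statement's English description precedes it below -/
import Mathlib

section
/- Let ν > -1 and let μ_ν be the measure on (0,∞) with density x^{2ν+1} dx. Then for all x, r > 0, μ_ν(B(x,r)) is comparable to min(1, r/x)·(x+r)^{2ν+2}, i.e. there exist constants C₁, C₂ > 0 depending only on ν such that C₁·min(1, r/x)·(x+r)^{2ν+2} ≤ μ_ν(B(x,r)) ≤ C₂·min(1, r/x)·(x+r)^{2ν+2}. -/
open MeasureTheory Set

/-- The measure on `(0,∞)` with density `x^(2ν+1) dx`. -/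
noncomputable def besselMeasure (ν : ℝ) : Measure ℝ :=
  (volume.restrict (Set.Ioi (0:ℝ))).withDensity fun x => ENNReal.ofReal (x ^ (2*ν+1))

lemma besselMeasure_ball (ν : ℝ) (hν : -1 < ν) (x r : ℝ) (hx : 0 < x) (hr : 0 < r) :
    besselMeasure ν (Metric.ball x r) =
      ENNReal.ofReal (((x+r)^(2*ν+2) - (max 0 (x-r))^(2*ν+2)) / (2*ν+2)) := by
  have h1 : -1 < 2*ν+1 := by linarith
  set a := max 0 (x-r) with ha
  have ha0 : 0 ≤ a := le_max_left _ _
  have hab : a < x + r := max_lt (by linarith) (by linarith)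
  have hmeas : MeasurableSet (Metric.ball x r) := measurableSet_ball
  have hset : Metric.ball x r ∩ Set.Ioi (0:ℝ) = Set.Ioo a (x+r) := by
    rw [Real.ball_eq_Ioo, Set.Ioo_inter_Ioi, max_comm]
  have hint : IntegrableOn (fun y : ℝ => y ^ (2*ν+1)) (Set.Ioo a (x+r)) := by
    exact ((intervalIntegral.intervalIntegrable_rpow' (a := a) (b := x+r) h1).1).mono_set
      Set.Ioo_subset_Ioc_self
  have hnn : 0 ≤ᵐ[volume.restrict (Set.Ioo a (x+r))] fun y : ℝ => y ^ (2*ν+1) := by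
    filter_upwards [ae_restrict_mem measurableSet_Ioo] with y hy
    exact Real.rpow_nonneg (le_trans ha0 hy.1.le) _
  calc besselMeasure ν (Metric.ball x r)
      = ∫⁻ y in Metric.ball x r ∩ Set.Ioi (0:ℝ), ENNReal.ofReal (y ^ (2*ν+1)) := by
        rw [besselMeasure, withDensity_apply _ hmeas, Measure.restrict_restrict hmeas]
    _ = ∫⁻ y in Set.Ioo a (x+r), ENNReal.ofReal (y ^ (2*ν+1)) := by rw [hset]
    _ = ENNReal.ofReal (∫ y in Set.Ioo a (x+r), y ^ (2*ν+1)) :=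
        (ofReal_integral_eq_lintegral_ofReal hint hnn).symm
    _ = ENNReal.ofReal (((x+r)^(2*ν+2) - a^(2*ν+2)) / (2*ν+2)) := by
        rw [← MeasureTheory.integral_Ioc_eq_integral_Ioo,
          ← intervalIntegral.integral_of_le hab.le, integral_rpow (Or.inl h1)]
        ring_nf

lemma bern_bounds (p t : ℝ) (hp : 0 < p) (ht1 : 1 ≤ t) (ht3 : t ≤ 3) :
    p * min 1 ((3:ℝ)^(p-1)) * (t-1) ≤ t^p - 1 ∧ t^p - 1 ≤ p * max 1 ((3:ℝ)^(p-1)) * (t-1) := by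
  have ht0 : (0:ℝ) < t := lt_of_lt_of_le one_pos ht1
  have hs0 : (0:ℝ) < 1/t := by positivity
  have hs1 : 1/t ≤ 1 := by rw [div_le_one ht0]; exact ht1
  have hid1 : t^p * (1/t)^p = 1 := by
    rw [← Real.mul_rpow ht0.le hs0.le, mul_one_div, div_self ht0.ne', Real.one_rpow]
  have hid2 : t^p * (1 - 1/t) = t^(p-1) * (t-1) := by
    rw [Real.rpow_sub ht0, Real.rpow_one]; field_simp
  have htp0 : (0:ℝ) < t^p := Real.rpow_pos_of_pos ht0 p
  have harg : (1:ℝ) + (1/t - 1) = 1/t := by ring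
  have harg2 : (1:ℝ) + (t - 1) = t := by ring
  rcases le_total 1 p with hp1 | hp1
  · -- p ≥ 1 : max = 3^(p-1), min includes 1
    have h3 : (1:ℝ) ≤ 3^(p-1) := by
      calc (1:ℝ) = (3:ℝ)^(0:ℝ) := (Real.rpow_zero 3).symm
        _ ≤ 3^(p-1) := Real.rpow_le_rpow_of_exponent_le (by norm_num) (by linarith)
    have hmin : min 1 ((3:ℝ)^(p-1)) ≤ 1 := min_le_left _ _
    have hmax : max 1 ((3:ℝ)^(p-1)) = 3^(p-1) := max_eq_right h3
    constructor
    · have hb := one_add_mul_self_le_rpow_one_add (s := t-1) (by linarith) hp1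
      rw [harg2] at hb
      nlinarith [mul_nonneg hp.le (sub_nonneg.2 ht1)]
    · have hb := one_add_mul_self_le_rpow_one_add (s := 1/t - 1) (by linarith) hp1
      rw [harg] at hb
      -- 1 - (1/t)^p ≤ p * (1 - 1/t)
      have key : t^p - 1 ≤ p * (t^(p-1) * (t-1)) := by
        have h1 : t^p * (1 - (1/t)^p) ≤ t^p * (p * (1 - 1/t)) := by
          apply mul_le_mul_of_nonneg_left _ htp0.le
          nlinarith
        calc t^p - 1 = t^p * (1 - (1/t)^p) := by rw [mul_sub, hid1, mul_one]
          _ ≤ t^p * (p * (1 - 1/t)) := h1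
          _ = p * (t^(p-1) * (t-1)) := by rw [← hid2]; ring
      have htle : t^(p-1) ≤ 3^(p-1) := Real.rpow_le_rpow ht0.le ht3 (by linarith)
      rw [hmax]
      nlinarith [mul_nonneg hp.le (sub_nonneg.2 ht1)]
  · -- p ≤ 1 : min = 3^(p-1), max includes 1
    have h3 : (3:ℝ)^(p-1) ≤ 1 := by
      calc (3:ℝ)^(p-1) ≤ (3:ℝ)^(0:ℝ) :=
            Real.rpow_le_rpow_of_exponent_le (by norm_num) (by linarith)
        _ = 1 := Real.rpow_zero 3
    have hmin : min 1 ((3:ℝ)^(p-1)) = 3^(p-1) := min_eq_right h3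
    have hmax : (1:ℝ) ≤ max 1 ((3:ℝ)^(p-1)) := le_max_left _ _
    constructor
    · have hb := rpow_one_add_le_one_add_mul_self (s := 1/t - 1) (by linarith) hp.le hp1
      rw [harg] at hb
      have key : p * (t^(p-1) * (t-1)) ≤ t^p - 1 := by
        have h1 : t^p * (p * (1 - 1/t)) ≤ t^p * (1 - (1/t)^p) := by
          apply mul_le_mul_of_nonneg_left _ htp0.le
          nlinarith
        calc p * (t^(p-1) * (t-1)) = t^p * (p * (1 - 1/t)) := by
              rw [← hid2]; ring
          _ ≤ t^p * (1 - (1/t)^p) := h1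
          _ = t^p - 1 := by rw [mul_sub, hid1, mul_one]
      have htle : (3:ℝ)^(p-1) ≤ t^(p-1) := Real.rpow_le_rpow_of_nonpos ht0 ht3 (by linarith)
      rw [hmin]
      nlinarith [mul_nonneg hp.le (sub_nonneg.2 ht1)]
    · have hb := rpow_one_add_le_one_add_mul_self (s := t - 1) (by linarith) hp.le hp1
      rw [harg2] at hb
      nlinarith [mul_nonneg hp.le (sub_nonneg.2 ht1)]

set_option maxHeartbeats 1000000 in
lemma real_bounds (p : ℝ) (hp : 0 < p) : ∃ D₁ D₂ : ℝ, 0 < D₁ ∧ 0 < D₂ ∧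
    ∀ x r : ℝ, 0 < x → 0 < r →
      D₁ * min 1 (r/x) * (x+r)^p ≤ (x+r)^p - (max 0 (x-r))^p ∧
      (x+r)^p - (max 0 (x-r))^p ≤ D₂ * min 1 (r/x) * (x+r)^p := by
  set k : ℝ := min 1 ((3:ℝ)^(p-1)) with hk
  set K : ℝ := max 1 ((3:ℝ)^(p-1)) with hK
  have hkpos : 0 < k := lt_min one_pos (Real.rpow_pos_of_pos (by norm_num) _)
  have hKone : (1:ℝ) ≤ K := le_max_left _ _
  have hc : (0:ℝ) < ((3/2:ℝ)^p - (1/2:ℝ)^p) :=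
    sub_pos.2 (Real.rpow_lt_rpow (by norm_num) (by norm_num) hp)
  refine ⟨min 1 (min (((3/2:ℝ)^p - (1/2:ℝ)^p)/2^p) (2*p*k/3^p)),
      max 2 (4*p*K), ?_, ?_, ?_⟩
  · have h2p : (0:ℝ) < (2:ℝ)^p := Real.rpow_pos_of_pos (by norm_num) _
    have h3p : (0:ℝ) < (3:ℝ)^p := Real.rpow_pos_of_pos (by norm_num) _
    exact lt_min one_pos (lt_min (by positivity) (by positivity))
  · exact lt_of_lt_of_le two_pos (le_max_left _ _)
  intro x r hx hr
  set D₁ : ℝ := min 1 (min (((3/2:ℝ)^p - (1/2:ℝ)^p)/2^p) (2*p*k/3^p)) with hD₁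
  set D₂ : ℝ := max 2 (4*p*K) with hD₂
  have h2p : (0:ℝ) < (2:ℝ)^p := Real.rpow_pos_of_pos (by norm_num) _
  have h3p : (0:ℝ) < (3:ℝ)^p := Real.rpow_pos_of_pos (by norm_num) _
  have hbpos : (0:ℝ) < x + r := by linarith
  have hbp : (0:ℝ) < (x+r)^p := Real.rpow_pos_of_pos hbpos p
  rcases le_or_gt x r with hxr | hxr
  · -- Case A : x ≤ r
    have hmax : max 0 (x-r) = 0 := max_eq_left (by linarith)
    have hminr : min 1 (r/x) = 1 := min_eq_left ((one_le_div hx).2 hxr)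
    rw [hmax, hminr, Real.zero_rpow hp.ne', sub_zero]
    constructor
    · have : D₁ ≤ 1 := min_le_left _ _
      nlinarith
    · have : (2:ℝ) ≤ D₂ := le_max_left _ _
      nlinarith
  · -- Case B : r < x
    have hmax : max 0 (x-r) = x - r := max_eq_right (by linarith)
    have hsle : r/x ≤ 1 := (div_le_one hx).2 hxr.le
    have hminr : min 1 (r/x) = r/x := min_eq_right hsle
    have hs0 : 0 < r/x := by positivity
    rw [hmax, hminr]
    rcases le_or_gt x (2*r) with hx2r | hx2r
    · -- B1 : x ≤ 2r < 2x
      have hs_half : (1/2:ℝ) ≤ r/x := by rw [le_div_iff₀ hx]; linarith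
      have h1 : (x-r)^p ≤ ((1/2:ℝ)*x)^p :=
        Real.rpow_le_rpow (by linarith) (by linarith) hp.le
      have h2 : ((3/2:ℝ)*x)^p ≤ (x+r)^p :=
        Real.rpow_le_rpow (by linarith) (by linarith) hp.le
      have h3 : (x+r)^p ≤ ((2:ℝ)*x)^p :=
        Real.rpow_le_rpow (by linarith) (by linarith) hp.le
      rw [Real.mul_rpow (by norm_num) hx.le] at h1 h2 h3
      have hxp : (0:ℝ) < x^p := Real.rpow_pos_of_pos hx p
      constructor
      · have hD : D₁ ≤ ((3/2:ℝ)^p - (1/2:ℝ)^p)/2^p := (min_le_right _ _).trans (min_le_left _ _)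
        calc D₁ * (r/x) * (x+r)^p ≤ (((3/2:ℝ)^p - (1/2:ℝ)^p)/2^p) * 1 * (x+r)^p := by
              apply mul_le_mul_of_nonneg_right _ hbp.le
              apply mul_le_mul hD hsle hs0.le (by positivity)
          _ ≤ (((3/2:ℝ)^p - (1/2:ℝ)^p)/2^p) * 1 * ((2:ℝ)^p * x^p) := by
              apply mul_le_mul_of_nonneg_left h3 (by positivity)
          _ = (3/2:ℝ)^p * x^p - (1/2:ℝ)^p * x^p := by field_simp
          _ ≤ (x+r)^p - (x-r)^p := by linarith
      · have hD : (4:ℝ)*p*K ≤ D₂ := le_max_right _ _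
        have h2D : (2:ℝ) ≤ D₂ := le_max_left _ _
        have hxrp : 0 ≤ (x-r)^p := Real.rpow_nonneg (by linarith) p
        nlinarith [mul_le_mul_of_nonneg_right hs_half hbp.le]
    · -- B2 : 2r < x
      have ha : (0:ℝ) < x - r := by linarith
      set t : ℝ := (x+r)/(x-r) with htd
      have ht1 : 1 ≤ t := by rw [le_div_iff₀ ha]; linarith
      have ht3 : t ≤ 3 := by rw [div_le_iff₀ ha]; linarith
      obtain ⟨hbl, hbu⟩ := bern_bounds p t hp ht1 ht3
      have hap : (0:ℝ) < (x-r)^p := Real.rpow_pos_of_pos ha p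
      have ht0 : (0:ℝ) ≤ t := by linarith
      have hbeq : (x+r)^p = (x-r)^p * t^p := by
        rw [← Real.mul_rpow ha.le ht0]
        congr 1
        rw [htd]; field_simp
      have hteq : t - 1 = 2*r/(x-r) := by
        rw [htd, div_sub_one ha.ne']
        congr 1; ring
      have hpk : (0:ℝ) ≤ p * k := mul_nonneg hp.le hkpos.le
      constructor
      · -- lower bound
        have hD : D₁ ≤ 2*p*k/3^p := (min_le_right _ _).trans (min_le_right _ _)
        have hba : (x+r)^p ≤ 3^p * (x-r)^p := by
          calc (x+r)^p ≤ (3*(x-r))^p := Real.rpow_le_rpow hbpos.le (by linarith) hp.le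
            _ = 3^p * (x-r)^p := Real.mul_rpow (by norm_num) ha.le
        have hts : 2*(r/x) ≤ t - 1 := by
          have e : 2*(r/x) = 2*r/x := by ring
          rw [hteq, e, div_le_div_iff₀ hx ha]; nlinarith
        calc D₁ * (r/x) * (x+r)^p ≤ (2*p*k/3^p) * (r/x) * (x+r)^p := by
              apply mul_le_mul_of_nonneg_right (mul_le_mul_of_nonneg_right hD hs0.le) hbp.le
          _ = (p*k*(2*(r/x))) * ((x+r)^p/3^p) := by ring
          _ ≤ (p*k*(t-1)) * (x-r)^p := by
              apply mul_le_mul (mul_le_mul_of_nonneg_left hts hpk)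
                _ (by positivity) (mul_nonneg hpk (by linarith))
              rw [div_le_iff₀ h3p, mul_comm]; exact hba
          _ ≤ (t^p - 1) * (x-r)^p := mul_le_mul_of_nonneg_right hbl hap.le
          _ = (x+r)^p - (x-r)^p := by rw [hbeq]; ring
      · -- upper bound
        have hD : (4:ℝ)*p*K ≤ D₂ := le_max_right _ _
        have hab : (x-r)^p ≤ (x+r)^p := Real.rpow_le_rpow ha.le (by linarith) hp.le
        have hts : t - 1 ≤ 4*(r/x) := by
          rw [hteq, div_le_iff₀ ha]
          have : 4*(r/x)*(x-r) = 4*r*(x-r)/x := by ring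
          rw [this, le_div_iff₀ hx]; nlinarith [mul_nonneg hr.le (by linarith : (0:ℝ) ≤ x - 2*r)]
        have hK0 : (0:ℝ) < K := lt_of_lt_of_le one_pos hKone
        calc (x+r)^p - (x-r)^p = (t^p - 1) * (x-r)^p := by rw [hbeq]; ring
          _ ≤ (p*K*(t-1)) * (x-r)^p := mul_le_mul_of_nonneg_right hbu hap.le
          _ ≤ (p*K*(4*(r/x))) * (x+r)^p := by
              have hpK : (0:ℝ) ≤ p * K := mul_nonneg hp.le (by linarith)
              apply mul_le_mul _ hab hap.le
                (mul_nonneg hpK (by positivity))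
              exact mul_le_mul_of_nonneg_left hts hpK
          _ = (4*p*K) * (r/x) * (x+r)^p := by ring
          _ ≤ D₂ * (r/x) * (x+r)^p := by
              apply mul_le_mul_of_nonneg_right (mul_le_mul_of_nonneg_right hD hs0.le) hbp.le

theorem measure_ball_comparable_of_neg_one_lt (ν : ℝ) (hν : -1 < ν) :
    ∃ C₁ C₂ : ℝ, 0 < C₁ ∧ 0 < C₂ ∧ ∀ x r : ℝ, 0 < x → 0 < r →
      ENNReal.ofReal (C₁ * min 1 (r / x) * (x + r) ^ (2*ν+2)) ≤
        besselMeasure ν (Metric.ball x r) ∧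
      besselMeasure ν (Metric.ball x r) ≤
        ENNReal.ofReal (C₂ * min 1 (r / x) * (x + r) ^ (2*ν+2)) := by
  have hp : (0:ℝ) < 2*ν+2 := by linarith
  obtain ⟨D₁, D₂, hD₁, hD₂, h⟩ := real_bounds (2*ν+2) hp
  refine ⟨D₁/(2*ν+2), D₂/(2*ν+2), by positivity, by positivity, ?_⟩
  intro x r hx hr
  obtain ⟨hl, hu⟩ := h x r hx hr
  rw [besselMeasure_ball ν hν x r hx hr]
  constructor
  · apply ENNReal.ofReal_le_ofReal
    have e : D₁/(2*ν+2) * min 1 (r/x) * (x+r)^(2*ν+2)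
        = (D₁ * min 1 (r/x) * (x+r)^(2*ν+2))/(2*ν+2) := by ring
    rw [e]
    exact (div_le_div_iff_of_pos_right hp).2 hl
  · apply ENNReal.ofReal_le_ofReal
    have e : D₂/(2*ν+2) * min 1 (r/x) * (x+r)^(2*ν+2)
        = (D₂ * min 1 (r/x) * (x+r)^(2*ν+2))/(2*ν+2) := by ring
    rw [e]
    exact (div_le_div_iff_of_pos_right hp).2 hu
end

section
/- Let ν > -1, δ ∈ (0, min(1/2, ν+1)) and c > 0. Then there exists C > 0 such that for every interval Q ⊂ (0,∞) and every y ∈ Q*, ∫_{Q**} sup_{t>0} t^δ · μ_ν(B(x,√t))^{-1} · exp(−|x−y|²/(ct)) dμ_ν(x) ≤ C·d_Q^{2δ}, where d_Q is the diameter of Q, Q* and Q** are concentric enlargements of Q by fixed factors κ, κ² with κ > 1 close to 1, and μ_ν has density x^{2ν+1} on (0,∞). -/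
open MeasureTheory Set

/-- The concentric enlargement by a factor `κ` of the interval `[a,b]`. -/
def enl (κ a b : ℝ) : Set ℝ :=
  Set.Icc ((a + b) / 2 - κ * (b - a) / 2) ((a + b) / 2 + κ * (b - a) / 2)

lemma aux_exp_bound (β : ℝ) (hβ : 0 < β) :
    ∃ K : ℝ, 0 < K ∧ ∀ u : ℝ, 0 ≤ u → u ^ β * Real.exp (-u) ≤ K := by
  set n : ℕ := ⌈β⌉₊ with hn
  have hβn : β ≤ n := Nat.le_ceil β
  have hn1 : 1 ≤ (n:ℝ) := by
    have : 0 < n := Nat.ceil_pos.mpr hβ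
    exact_mod_cast this
  refine ⟨max 1 ((n:ℝ)^n), lt_of_lt_of_le one_pos (le_max_left _ _), fun u hu => ?_⟩
  rcases le_or_gt u 1 with h1 | h1
  · refine le_trans ?_ (le_max_left _ _)
    have h2 : u ^ β ≤ 1 := Real.rpow_le_one hu h1 hβ.le
    have h3 : Real.exp (-u) ≤ 1 := Real.exp_le_one_iff.mpr (by linarith)
    nlinarith [Real.exp_pos (-u), Real.rpow_nonneg hu β]
  · refine le_trans ?_ (le_max_right _ _)
    have hu0 : 0 < u := lt_trans one_pos h1
    -- exp u ≥ (u/n)^n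
    have hexp : (u / n) ^ n ≤ Real.exp u := by
      have h4 : u / n ≤ Real.exp (u / n) := by
        have := Real.add_one_le_exp (u / n)
        nlinarith [div_nonneg hu (by linarith : (0:ℝ) ≤ n)]
      calc (u / n) ^ n ≤ Real.exp (u / n) ^ n := by
            exact pow_le_pow_left₀ (div_nonneg hu (by linarith)) h4 n
        _ = Real.exp u := by
            rw [← Real.exp_nat_mul]
            congr 1
            field_simp
    have huβ : u ^ β ≤ u ^ (n:ℝ) := Real.rpow_le_rpow_of_exponent_le h1.le hβn
    have hun : u ^ (n:ℝ) = u ^ n := Real.rpow_natCast u n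
    have hden : (u/n)^n = u^n / (n:ℝ)^n := div_pow u _ n
    have h5 : u ^ n / (n:ℝ)^n ≤ Real.exp u := by rw [← hden]; exact hexp
    have h6 : u ^ β * Real.exp (-u) ≤ u ^ n * Real.exp (-u) := by
      have := Real.exp_pos (-u)
      nlinarith
    have h7 : u ^ n * Real.exp (-u) ≤ (n:ℝ)^n := by
      rw [Real.exp_neg]
      rw [div_le_iff₀ (by positivity : (0:ℝ) < (n:ℝ)^n)] at h5
      have := Real.exp_pos u
      rw [mul_inv_le_iff₀ this]
      nlinarith
    calc u ^ β * Real.exp (-u) ≤ u ^ n * Real.exp (-u) := h6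
      _ ≤ _ := h7

lemma aux_gauss_sup (β c : ℝ) (hβ : 0 < β) (hc : 0 < c) :
    ∃ K : ℝ, 0 < K ∧ ∀ s t : ℝ, 0 < s → 0 < t →
      t ^ (-β) * Real.exp (-(s^2) / (c*t)) ≤ K * s ^ (-(2*β)) := by
  obtain ⟨K₁, hK₁, hK⟩ := aux_exp_bound β hβ
  refine ⟨K₁ * c ^ β, by positivity, fun s t hs ht => ?_⟩
  set u : ℝ := s^2 / (c*t) with hu
  have hu0 : 0 < u := by positivity
  have h1 : u ^ β * Real.exp (-u) ≤ K₁ := hK u hu0.le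
  have hub : u ^ β = s ^ (2*β) / (c ^ β * t ^ β) := by
    rw [hu, Real.div_rpow (sq_nonneg s) (by positivity), ← Real.mul_rpow hc.le ht.le]
    congr 1
    rw [← Real.rpow_natCast s 2, ← Real.rpow_mul hs.le]
    norm_num
  have huneg : u ^ (-β) = c ^ β * t ^ β * s ^ (-(2*β)) := by
    rw [Real.rpow_neg hu0.le, hub, Real.rpow_neg hs.le]
    field_simp
  have hexp : Real.exp (-u) ≤ K₁ * u ^ (-β) := by
    have h2 : u ^ (-β) = (u ^ β)⁻¹ := Real.rpow_neg hu0.le β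
    have h3 : 0 < u ^ β := Real.rpow_pos_of_pos hu0 β
    rw [h2, mul_comm K₁, ← div_eq_inv_mul, le_div_iff₀ h3]
    linarith [h1]
  have htt : t ^ (-β) * t ^ β = 1 := by
    rw [Real.rpow_neg ht.le]
    exact inv_mul_cancel₀ (Real.rpow_pos_of_pos ht β).ne'
  have htpos : 0 < t ^ (-β) := Real.rpow_pos_of_pos ht _
  have hgoal : -s^2/(c*t) = -u := by rw [hu]; ring
  rw [hgoal]
  calc t ^ (-β) * Real.exp (-u) ≤ t ^ (-β) * (K₁ * u ^ (-β)) := by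
        exact mul_le_mul_of_nonneg_left hexp htpos.le
    _ = K₁ * c ^ β * s ^ (-(2*β)) * (t ^ (-β) * t ^ β) := by rw [huneg]; ring
    _ = K₁ * c ^ β * s ^ (-(2*β)) := by rw [htt, mul_one]

lemma aux_ball_lower (ν : ℝ) :
    ∃ c₀ : ℝ, 0 < c₀ ∧ ∀ x r : ℝ, 0 < x → 0 < r →
      ENNReal.ofReal (c₀ * r * (x+r) ^ (2*ν+1)) ≤ besselMeasure ν (Metric.ball x r) := by
  set p : ℝ := 2*ν+1 with hp
  set m₂ : ℝ := min ((2:ℝ) ^ (-p)) 1 with hm₂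
  have hm₂0 : 0 < m₂ := lt_min (Real.rpow_pos_of_pos two_pos _) one_pos
  refine ⟨m₂/2, by positivity, fun x r hx hr => ?_⟩
  set J : Set ℝ := Ioo (max ((x+r)/2) x) (x+r) with hJ
  have hxr : 0 < x + r := by linarith
  have hJb : J ⊆ Metric.ball x r ∩ Ioi 0 := by
    intro z hz
    obtain ⟨hz1, hz2⟩ := hz
    have hz3 : x < z := lt_of_le_of_lt (le_max_right _ _) hz1
    constructor
    · rw [Metric.mem_ball, Real.dist_eq, abs_lt]
      constructor <;> linarith
    · exact lt_trans hx hz3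
  -- pointwise lower bound on J
  have hpt : ∀ z ∈ J, ENNReal.ofReal ((x+r)^p * m₂) ≤ ENNReal.ofReal (z ^ p) := by
    intro z hz
    obtain ⟨hz1, hz2⟩ := hz
    have hz4 : (x+r)/2 ≤ z := le_trans (le_max_left _ _) hz1.le
    have hz0 : 0 < z := lt_of_lt_of_le (by linarith) hz4
    apply ENNReal.ofReal_le_ofReal
    rcases le_or_gt 0 p with hp0 | hp0
    · have h1 : (x+r)^p * m₂ ≤ (x+r)^p * (2:ℝ)^(-p) := by
        have := Real.rpow_nonneg hxr.le p
        exact mul_le_mul_of_nonneg_left (min_le_left _ _) this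
      have h2 : (x+r)^p * (2:ℝ)^(-p) = ((x+r)/2)^p := by
        rw [Real.div_rpow hxr.le (by norm_num), Real.rpow_neg (by norm_num)]
        ring
      have h3 : ((x+r)/2)^p ≤ z^p := Real.rpow_le_rpow (by linarith) hz4 hp0
      linarith
    · have h1 : (x+r)^p * m₂ ≤ (x+r)^p * 1 := by
        have := Real.rpow_nonneg hxr.le p
        exact mul_le_mul_of_nonneg_left (min_le_right _ _) this
      have h3 : (x+r)^p ≤ z^p := Real.rpow_le_rpow_of_nonpos hz0 hz2.le hp0.le
      linarith
  have hmeasJ : MeasurableSet J := measurableSet_Ioo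
  have hcalc : besselMeasure ν (Metric.ball x r)
      = ∫⁻ z in Metric.ball x r ∩ Ioi 0, ENNReal.ofReal (z ^ p) ∂volume := by
    rw [besselMeasure, withDensity_apply _ Metric.isOpen_ball.measurableSet,
      Measure.restrict_restrict Metric.isOpen_ball.measurableSet]
  rw [hcalc]
  have step1 : ∫⁻ z in J, ENNReal.ofReal (z ^ p) ∂volume
      ≤ ∫⁻ z in Metric.ball x r ∩ Ioi 0, ENNReal.ofReal (z ^ p) ∂volume :=
    lintegral_mono_set hJb
  refine le_trans ?_ step1
  have step2 : ∫⁻ z in J, ENNReal.ofReal ((x+r)^p * m₂) ∂volume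
      ≤ ∫⁻ z in J, ENNReal.ofReal (z ^ p) ∂volume := setLIntegral_mono' hmeasJ hpt
  refine le_trans ?_ step2
  rw [setLIntegral_const, hJ, Real.volume_Ioo]
  rw [← ENNReal.ofReal_mul (by positivity)]
  apply ENNReal.ofReal_le_ofReal
  have hlen : r/2 ≤ (x + r) - max ((x+r)/2) x := by
    rcases max_cases ((x+r)/2) x with ⟨h1, h2⟩ | ⟨h1, h2⟩ <;> rw [h1] <;> linarith
  have h5 : 0 ≤ (x+r)^p * m₂ := by positivity
  calc m₂/2 * r * (x+r)^p = ((x+r)^p * m₂) * (r/2) := by ring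
    _ ≤ ((x+r)^p * m₂) * ((x + r) - max ((x+r)/2) x) := mul_le_mul_of_nonneg_left hlen h5

set_option maxHeartbeats 1000000 in
lemma aux_pointwise_real (ν δ c c₀ : ℝ) (hδ0 : 0 < δ) (hδ1 : δ < 1/2)
    (hδ2 : δ < ν + 1) (hc : 0 < c) (hc₀ : 0 < c₀) :
    ∃ C : ℝ, 0 < C ∧ ∀ x s r : ℝ, 0 < x → 0 < s → 0 < r →
      x ^ (2*ν+1) * (c₀ * r * (x+r) ^ (2*ν+1))⁻¹ *
          ((r^2) ^ δ * Real.exp (-(s^2) / (c * r^2)))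
        ≤ C * (s ^ (2*δ-1) + x ^ (2*δ-1)) := by
  obtain ⟨K₁, hK₁0, hK₁⟩ := aux_gauss_sup (1/2 - δ) c (by linarith) hc
  obtain ⟨K₂, hK₂0, hK₂⟩ := aux_gauss_sup (ν + 1 - δ) c (by linarith) hc
  set p : ℝ := 2*ν+1 with hp
  set C₂ : ℝ := max 1 ((2:ℝ) ^ (-p)) with hC₂
  have hC₂0 : 0 < C₂ := lt_of_lt_of_le one_pos (le_max_left _ _)
  refine ⟨c₀⁻¹ * C₂ * (K₁ + K₂ + 1), by positivity, fun x s r hx hs hr => ?_⟩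
  have hxr0 : 0 < x + r := by linarith
  set E : ℝ := Real.exp (-(s^2) / (c * r^2)) with hE
  have hE0 : 0 < E := Real.exp_pos _
  have hE1 : E ≤ 1 := by
    rw [hE]
    apply Real.exp_le_one_iff.mpr
    have h0 : 0 ≤ s^2/(c*r^2) := by positivity
    rw [neg_div]
    linarith
  have hr2 : ∀ e : ℝ, ((r^2:ℝ)) ^ e = r ^ (2*e) := by
    intro e
    rw [← Real.rpow_natCast r 2, ← Real.rpow_mul hr.le]
    norm_num
  have hLHS : x ^ p * (c₀ * r * (x+r) ^ p)⁻¹ * ((r^2) ^ δ * E)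
      = c₀⁻¹ * ((x ^ p * (x+r) ^ (-p)) * (r ^ (2*δ-1) * E)) := by
    rw [hr2 δ, Real.rpow_neg hxr0.le,
      show (2*δ-1) = 2*δ + (-1) by ring, Real.rpow_add hr, Real.rpow_neg_one]
    have h1 : (x+r) ^ p ≠ 0 := (Real.rpow_pos_of_pos hxr0 p).ne'
    field_simp
  rw [hLHS]
  have hq1 : 0 ≤ s ^ (2*δ-1) := Real.rpow_nonneg hs.le _
  have hq2 : 0 ≤ x ^ (2*δ-1) := Real.rpow_nonneg hx.le _
  -- two regimes
  rcases le_total r x with hrx | hxr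
  · -- r ≤ x : A ≤ C₂, B ≤ K₁ s^(2δ-1)
    have hA : x ^ p * (x+r) ^ (-p) ≤ C₂ := by
      rcases le_or_gt 0 p with hp0 | hp0
      · have h1 : (x+r) ^ (-p) ≤ x ^ (-p) :=
          Real.rpow_le_rpow_of_nonpos hx (by linarith) (by linarith)
        have h2 : x ^ p * x ^ (-p) = 1 := by
          rw [← Real.rpow_add hx]; norm_num
        calc x ^ p * (x+r) ^ (-p) ≤ x ^ p * x ^ (-p) :=
              mul_le_mul_of_nonneg_left h1 (Real.rpow_nonneg hx.le _)
          _ = 1 := h2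
          _ ≤ C₂ := le_max_left _ _
      · have h1 : (x+r) ^ (-p) ≤ (2*x) ^ (-p) :=
          Real.rpow_le_rpow hxr0.le (by linarith) (by linarith)
        have h2 : (2*x) ^ (-p) = (2:ℝ) ^ (-p) * x ^ (-p) :=
          Real.mul_rpow (by norm_num) hx.le
        have h3 : x ^ p * x ^ (-p) = 1 := by
          rw [← Real.rpow_add hx]; norm_num
        have h4 : (0:ℝ) < (2:ℝ) ^ (-p) := Real.rpow_pos_of_pos two_pos _
        calc x ^ p * (x+r) ^ (-p) ≤ x ^ p * (2*x) ^ (-p) :=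
              mul_le_mul_of_nonneg_left h1 (Real.rpow_nonneg hx.le _)
          _ = (2:ℝ) ^ (-p) * (x ^ p * x ^ (-p)) := by rw [h2]; ring
          _ = (2:ℝ) ^ (-p) := by rw [h3, mul_one]
          _ ≤ C₂ := le_max_right _ _
    have hB : r ^ (2*δ-1) * E ≤ K₁ * s ^ (2*δ-1) := by
      have := hK₁ s (r^2) hs (by positivity)
      rw [hr2 (-(1/2 - δ))] at this
      rw [show 2 * -(1/2 - δ) = 2*δ-1 by ring] at this
      rw [show -(2 * (1/2 - δ)) = 2*δ-1 by ring] at this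
      exact this
    have hApos : 0 ≤ x ^ p * (x+r) ^ (-p) := by positivity
    have hBpos : 0 ≤ r ^ (2*δ-1) * E := by positivity
    calc c₀⁻¹ * ((x ^ p * (x+r) ^ (-p)) * (r ^ (2*δ-1) * E))
        ≤ c₀⁻¹ * (C₂ * (K₁ * s ^ (2*δ-1))) := by
          apply mul_le_mul_of_nonneg_left _ (by positivity)
          exact mul_le_mul hA hB hBpos hC₂0.le
      _ = (c₀⁻¹ * C₂) * (K₁ * s ^ (2*δ-1)) := by ring
      _ ≤ (c₀⁻¹ * C₂) * ((K₁ + K₂ + 1) * (s ^ (2*δ-1) + x ^ (2*δ-1))) := by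
          apply mul_le_mul_of_nonneg_left _ (by positivity)
          nlinarith [mul_nonneg (by linarith : (0:ℝ) ≤ K₂+1) hq1,
            mul_nonneg (by positivity : (0:ℝ) ≤ K₁+K₂+1) hq2]
      _ = c₀⁻¹ * C₂ * (K₁ + K₂ + 1) * (s ^ (2*δ-1) + x ^ (2*δ-1)) := by ring
  · -- x ≤ r
    have hA : (x+r) ^ (-p) ≤ C₂ * r ^ (-p) := by
      rcases le_or_gt 0 p with hp0 | hp0
      · have h1 : (x+r) ^ (-p) ≤ r ^ (-p) :=
          Real.rpow_le_rpow_of_nonpos hr (by linarith) (by linarith)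
        have : r ^ (-p) ≤ C₂ * r ^ (-p) := by
          nlinarith [Real.rpow_nonneg hr.le (-p), le_max_left (1:ℝ) ((2:ℝ)^(-p))]
        linarith
      · have h1 : (x+r) ^ (-p) ≤ (2*r) ^ (-p) :=
          Real.rpow_le_rpow hxr0.le (by linarith) (by linarith)
        have h2 : (2*r) ^ (-p) = (2:ℝ) ^ (-p) * r ^ (-p) :=
          Real.mul_rpow (by norm_num) hr.le
        have h4 : (2:ℝ) ^ (-p) ≤ C₂ := le_max_right _ _
        have h5 : 0 ≤ r ^ (-p) := Real.rpow_nonneg hr.le _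
        calc (x+r) ^ (-p) ≤ (2:ℝ) ^ (-p) * r ^ (-p) := by rw [← h2]; exact h1
          _ ≤ C₂ * r ^ (-p) := mul_le_mul_of_nonneg_right h4 h5
    -- so LHS ≤ c₀⁻¹ C₂ x^p r^(2δ-1-p) E
    have hstep : (x ^ p * (x+r) ^ (-p)) * (r ^ (2*δ-1) * E)
        ≤ C₂ * (x ^ p * (r ^ (2*δ-1-p) * E)) := by
      have h6 : r ^ (-p) * r ^ (2*δ-1) = r ^ (2*δ-1-p) := by
        rw [← Real.rpow_add hr]; congr 1; ring
      have h7 : x ^ p * (x+r) ^ (-p) ≤ x ^ p * (C₂ * r ^ (-p)) :=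
        mul_le_mul_of_nonneg_left hA (Real.rpow_nonneg hx.le _)
      calc (x ^ p * (x+r) ^ (-p)) * (r ^ (2*δ-1) * E)
          ≤ (x ^ p * (C₂ * r ^ (-p))) * (r ^ (2*δ-1) * E) := by
            apply mul_le_mul_of_nonneg_right h7 (by positivity)
        _ = C₂ * (x ^ p * ((r ^ (-p) * r ^ (2*δ-1)) * E)) := by ring
        _ = C₂ * (x ^ p * (r ^ (2*δ-1-p) * E)) := by rw [h6]
    have hcore : x ^ p * (r ^ (2*δ-1-p) * E) ≤ (K₂ + 1) * (s ^ (2*δ-1) + x ^ (2*δ-1)) := by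
      have hexp : 2*δ-1-p = -(2*(ν+1-δ)) := by rw [hp]; ring
      rcases le_total s x with hsx | hxs
      · -- E ≤ 1, r^(...) ≤ x^(...)
        have h8 : r ^ (2*δ-1-p) ≤ x ^ (2*δ-1-p) := by
          apply Real.rpow_le_rpow_of_nonpos hx hxr
          rw [hexp]; nlinarith
        have h9 : x ^ p * x ^ (2*δ-1-p) = x ^ (2*δ-1) := by
          rw [← Real.rpow_add hx]; congr 1; ring
        have hxp : 0 ≤ x ^ p := Real.rpow_nonneg hx.le _
        have hr8 : 0 ≤ r ^ (2*δ-1-p) := Real.rpow_nonneg hr.le _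
        have h10 : x ^ p * (r ^ (2*δ-1-p) * E) ≤ x ^ p * x ^ (2*δ-1-p) := by
          apply mul_le_mul_of_nonneg_left _ hxp
          calc r ^ (2*δ-1-p) * E ≤ r ^ (2*δ-1-p) * 1 :=
                mul_le_mul_of_nonneg_left hE1 hr8
            _ = r ^ (2*δ-1-p) := mul_one _
            _ ≤ x ^ (2*δ-1-p) := h8
        rw [h9] at h10
        nlinarith [mul_nonneg hK₂0.le hq1, mul_nonneg hK₂0.le hq2]
      · -- x ≤ s : use K₂
        have h11 : r ^ (2*δ-1-p) * E ≤ K₂ * s ^ (-(2*(ν+1-δ))) := by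
          have := hK₂ s (r^2) hs (by positivity)
          rw [hr2 (-(ν+1-δ))] at this
          rw [show 2 * -(ν+1-δ) = 2*δ-1-p by rw [hp]; ring] at this
          exact this
        have h12 : x ^ p * (r ^ (2*δ-1-p) * E) ≤ K₂ * (x ^ p * s ^ (-(2*(ν+1-δ)))) := by
          have hxp : 0 ≤ x ^ p := Real.rpow_nonneg hx.le _
          calc x ^ p * (r ^ (2*δ-1-p) * E) ≤ x ^ p * (K₂ * s ^ (-(2*(ν+1-δ)))) :=
                mul_le_mul_of_nonneg_left h11 hxp
            _ = K₂ * (x ^ p * s ^ (-(2*(ν+1-δ)))) := by ring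
        have h13 : x ^ p * s ^ (-(2*(ν+1-δ))) ≤ s ^ (2*δ-1) + x ^ (2*δ-1) := by
          rcases le_or_gt 0 p with hp0 | hp0
          · have h14 : x ^ p ≤ s ^ p := Real.rpow_le_rpow hx.le hxs hp0
            have h15 : s ^ p * s ^ (-(2*(ν+1-δ))) = s ^ (2*δ-1) := by
              rw [← Real.rpow_add hs]; congr 1; rw [hp]; ring
            have h16 : x ^ p * s ^ (-(2*(ν+1-δ))) ≤ s ^ p * s ^ (-(2*(ν+1-δ))) :=
              mul_le_mul_of_nonneg_right h14 (Real.rpow_nonneg hs.le _)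
            rw [h15] at h16
            linarith
          · have h14 : s ^ (-(2*(ν+1-δ))) ≤ x ^ (-(2*(ν+1-δ))) :=
              Real.rpow_le_rpow_of_nonpos hx hxs (by nlinarith)
            have h15 : x ^ p * x ^ (-(2*(ν+1-δ))) = x ^ (2*δ-1) := by
              rw [← Real.rpow_add hx]; congr 1; rw [hp]; ring
            have h16 : x ^ p * s ^ (-(2*(ν+1-δ))) ≤ x ^ p * x ^ (-(2*(ν+1-δ))) :=
              mul_le_mul_of_nonneg_left h14 (Real.rpow_nonneg hx.le _)
            rw [h15] at h16
            linarith
        have hS : 0 ≤ s ^ (2*δ-1) + x ^ (2*δ-1) := by linarith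
        calc x ^ p * (r ^ (2*δ-1-p) * E) ≤ K₂ * (x ^ p * s ^ (-(2*(ν+1-δ)))) := h12
          _ ≤ K₂ * (s ^ (2*δ-1) + x ^ (2*δ-1)) :=
              mul_le_mul_of_nonneg_left h13 hK₂0.le
          _ ≤ (K₂ + 1) * (s ^ (2*δ-1) + x ^ (2*δ-1)) :=
              mul_le_mul_of_nonneg_right (by linarith) hS
    calc c₀⁻¹ * ((x ^ p * (x+r) ^ (-p)) * (r ^ (2*δ-1) * E))
        ≤ c₀⁻¹ * (C₂ * ((K₂ + 1) * (s ^ (2*δ-1) + x ^ (2*δ-1)))) := by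
          apply mul_le_mul_of_nonneg_left _ (by positivity)
          refine le_trans hstep ?_
          exact mul_le_mul_of_nonneg_left hcore hC₂0.le
      _ = (c₀⁻¹ * C₂) * ((K₂ + 1) * (s ^ (2*δ-1) + x ^ (2*δ-1))) := by ring
      _ ≤ (c₀⁻¹ * C₂) * ((K₁ + K₂ + 1) * (s ^ (2*δ-1) + x ^ (2*δ-1))) := by
          apply mul_le_mul_of_nonneg_left _ (by positivity)
          apply mul_le_mul_of_nonneg_right (by linarith) (by linarith)
      _ = c₀⁻¹ * C₂ * (K₁ + K₂ + 1) * (s ^ (2*δ-1) + x ^ (2*δ-1)) := by ring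

lemma aux_pointwise_ennreal (ν δ c : ℝ) (hδ0 : 0 < δ) (hδ1 : δ < 1/2)
    (hδ2 : δ < ν + 1) (hc : 0 < c) :
    ∃ C : ℝ, 0 < C ∧ ∀ x y : ℝ, 0 < x → x ≠ y →
      ENNReal.ofReal (x ^ (2*ν+1)) *
        (⨆ (t : ℝ) (_ : 0 < t),
          (besselMeasure ν (Metric.ball x (Real.sqrt t)))⁻¹ *
            ENNReal.ofReal (t ^ δ * Real.exp (-(|x - y|^2) / (c * t))))
      ≤ ENNReal.ofReal (C * (|x - y| ^ (2*δ-1) + x ^ (2*δ-1))) := by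
  obtain ⟨c₀, hc₀, hball⟩ := aux_ball_lower ν
  obtain ⟨C, hC0, hC⟩ := aux_pointwise_real ν δ c c₀ hδ0 hδ1 hδ2 hc hc₀
  refine ⟨C, hC0, fun x y hx hxy => ?_⟩
  rw [ENNReal.mul_iSup]
  refine iSup_le fun t => ?_
  rw [ENNReal.mul_iSup]
  refine iSup_le fun ht => ?_
  obtain ⟨r, hr, rfl⟩ : ∃ r : ℝ, 0 < r ∧ r^2 = t :=
    ⟨Real.sqrt t, Real.sqrt_pos.mpr ht, Real.sq_sqrt ht.le⟩
  rw [Real.sqrt_sq hr.le]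
  set s : ℝ := |x - y| with hs'
  have hs : 0 < s := abs_pos.mpr (sub_ne_zero.mpr hxy)
  set D : ℝ := c₀ * r * (x+r) ^ (2*ν+1) with hD'
  have hD : 0 < D := by
    have := Real.rpow_pos_of_pos (by linarith : (0:ℝ) < x + r) (2*ν+1)
    positivity
  have hinv : (besselMeasure ν (Metric.ball x r))⁻¹ ≤ (ENNReal.ofReal D)⁻¹ :=
    ENNReal.inv_le_inv' (hball x r hx hr)
  set G : ℝ := (r^2) ^ δ * Real.exp (-(s^2) / (c * r^2)) with hG'
  have hG0 : 0 ≤ G := by positivity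
  calc ENNReal.ofReal (x ^ (2*ν+1)) *
        ((besselMeasure ν (Metric.ball x r))⁻¹ * ENNReal.ofReal ((r^2) ^ δ * Real.exp (-(s^2) / (c * r^2))))
      ≤ ENNReal.ofReal (x ^ (2*ν+1)) * ((ENNReal.ofReal D)⁻¹ * ENNReal.ofReal G) := by
        apply mul_le_mul_right
        exact mul_le_mul_left hinv _
    _ = ENNReal.ofReal (x ^ (2*ν+1) * (D⁻¹ * G)) := by
        rw [← ENNReal.ofReal_inv_of_pos hD, ← ENNReal.ofReal_mul (by positivity),
          ← ENNReal.ofReal_mul (Real.rpow_nonneg hx.le _)]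
    _ ≤ ENNReal.ofReal (C * (s ^ (2*δ-1) + x ^ (2*δ-1))) := by
        apply ENNReal.ofReal_le_ofReal
        have := hC x s r hx hs hr
        calc x ^ (2*ν+1) * (D⁻¹ * G) = x ^ (2*ν+1) * D⁻¹ * G := by ring
          _ ≤ C * (s ^ (2*δ-1) + x ^ (2*δ-1)) := this

lemma lint_Ioc_rpow (q L : ℝ) (hq : -1 < q) (hL : 0 < L) :
    ∫⁻ x in Ioc (0:ℝ) L, ENNReal.ofReal (x ^ q) ≤ ENNReal.ofReal (L^(q+1)/(q+1)) := by
  have hint : IntervalIntegrable (fun x : ℝ => x ^ q) volume 0 L :=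
    intervalIntegral.intervalIntegrable_rpow' hq
  have hIoc : IntegrableOn (fun x : ℝ => x ^ q) (Ioc 0 L) volume := by
    rw [intervalIntegrable_iff_integrableOn_Ioc_of_le hL.le] at hint
    exact hint
  have hnn : 0 ≤ᵐ[volume.restrict (Ioc (0:ℝ) L)] fun x : ℝ => x ^ q := by
    filter_upwards [ae_restrict_mem measurableSet_Ioc] with x hx
    exact Real.rpow_nonneg hx.1.le _
  rw [← ofReal_integral_eq_lintegral_ofReal hIoc hnn]
  apply ENNReal.ofReal_le_ofReal
  rw [← intervalIntegral.integral_of_le hL.le]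
  rw [integral_rpow (Or.inl hq)]
  rw [Real.zero_rpow (by linarith : q + 1 ≠ 0)]
  simp

lemma lint_abs_rpow (q L y : ℝ) (hq : -1 < q) (hL : 0 < L) :
    ∫⁻ x in Icc (y-L) (y+L), ENNReal.ofReal (|x - y| ^ q)
      ≤ ENNReal.ofReal (2 * (L^(q+1)/(q+1))) := by
  have hsplit : Icc (y-L) (y+L) = Icc (y-L) y ∪ Ioc y (y+L) :=
    (Icc_union_Ioc_eq_Icc (by linarith) (by linarith)).symm
  rw [hsplit]
  refine le_trans (lintegral_union_le _ _ _) ?_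
  have hIoc0 : volume.restrict (Icc (0:ℝ) L) = volume.restrict (Ioc (0:ℝ) L) :=
    (Measure.restrict_congr_set Ioc_ae_eq_Icc).symm
  have h1 : ∫⁻ x in Icc (y-L) y, ENNReal.ofReal (|x - y| ^ q)
      ≤ ENNReal.ofReal (L^(q+1)/(q+1)) := by
    have hcong : ∫⁻ x in Icc (y-L) y, ENNReal.ofReal (|x - y| ^ q)
        = ∫⁻ x in Icc (y-L) y, ENNReal.ofReal ((y - x) ^ q) := by
      apply setLIntegral_congr_fun measurableSet_Icc
      intro x hx; beta_reduce
      rw [abs_sub_comm, abs_of_nonneg (by linarith [hx.2] : (0:ℝ) ≤ y - x)]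
    rw [hcong]
    have hpre : Icc (y-L) y = (fun x : ℝ => y - x) ⁻¹' (Icc 0 L) := by
      ext x
      simp only [mem_Icc, mem_preimage]
      constructor <;> intro h <;> constructor <;> linarith [h.1, h.2]
    rw [hpre]
    rw [(Measure.measurePreserving_sub_left volume y).setLIntegral_comp_preimage_emb
      (MeasurableEquiv.subLeft y).measurableEmbedding (fun u => ENNReal.ofReal (u ^ q)) _]
    rw [hIoc0]
    exact lint_Ioc_rpow q L hq hL
  have h2 : ∫⁻ x in Ioc y (y+L), ENNReal.ofReal (|x - y| ^ q)
      ≤ ENNReal.ofReal (L^(q+1)/(q+1)) := by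
    have hcong : ∫⁻ x in Ioc y (y+L), ENNReal.ofReal (|x - y| ^ q)
        = ∫⁻ x in Ioc y (y+L), ENNReal.ofReal ((x - y) ^ q) := by
      apply setLIntegral_congr_fun measurableSet_Ioc
      intro x hx; beta_reduce
      rw [abs_of_nonneg (by linarith [hx.1] : (0:ℝ) ≤ x - y)]
    rw [hcong]
    have hpre : Ioc y (y+L) = (fun x : ℝ => x - y) ⁻¹' (Ioc 0 L) := by
      ext x
      simp only [mem_Ioc, mem_preimage]
      constructor <;> intro h <;> constructor <;> linarith [h.1, h.2]
    rw [hpre]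
    rw [(measurePreserving_sub_right volume y).setLIntegral_comp_preimage_emb
      (MeasurableEquiv.subRight y).measurableEmbedding (fun u => ENNReal.ofReal (u ^ q)) _]
    exact lint_Ioc_rpow q L hq hL
  have hq1 : (0:ℝ) < q + 1 := by linarith
  calc (∫⁻ x in Icc (y-L) y, ENNReal.ofReal (|x - y| ^ q))
        + ∫⁻ x in Ioc y (y+L), ENNReal.ofReal (|x - y| ^ q)
      ≤ ENNReal.ofReal (L^(q+1)/(q+1)) + ENNReal.ofReal (L^(q+1)/(q+1)) := add_le_add h1 h2
    _ = ENNReal.ofReal (2 * (L^(q+1)/(q+1))) := by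
        rw [← ENNReal.ofReal_add (by positivity) (by positivity)]
        congr 1; ring

lemma lint_pos_rpow (q : ℝ) (hq : -1 < q) (hq0 : q < 0) :
    ∃ C : ℝ, 0 < C ∧ ∀ A B : ℝ, A < B →
      ∫⁻ x in Icc A B ∩ Ioi 0, ENNReal.ofReal (x ^ q)
        ≤ ENNReal.ofReal (C * (B-A)^(q+1)) := by
  have hq1 : (0:ℝ) < q + 1 := by linarith
  refine ⟨(2:ℝ)^(q+1)/(q+1) + 1, by positivity, fun A B hAB => ?_⟩
  set L : ℝ := B - A with hL'
  have hL : 0 < L := by simp [hL']; linarith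
  have hLq : 0 < L ^ (q+1) := Real.rpow_pos_of_pos hL _
  rcases le_or_gt A L with hA | hA
  · have hsub : Icc A B ∩ Ioi 0 ⊆ Ioc 0 (2*L) := by
      intro x hx
      obtain ⟨⟨hx1, hx2⟩, hx3⟩ := hx
      exact ⟨hx3, by rw [hL'] at *; linarith⟩
    refine le_trans (lintegral_mono_set hsub) ?_
    refine le_trans (lint_Ioc_rpow q (2*L) hq (by linarith)) ?_
    apply ENNReal.ofReal_le_ofReal
    rw [Real.mul_rpow (by norm_num) hL.le]
    rw [div_eq_mul_inv, div_eq_mul_inv]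
    have h2q : 0 < (2:ℝ)^(q+1) := Real.rpow_pos_of_pos two_pos _
    have hinv : 0 < (q+1)⁻¹ := by positivity
    nlinarith
  · -- L < A : x ≥ A > L, x^q ≤ L^q
    have hA0 : 0 < A := lt_trans hL hA
    have hbd : ∫⁻ x in Icc A B ∩ Ioi 0, ENNReal.ofReal (x ^ q)
        ≤ ∫⁻ _x in Icc A B ∩ Ioi 0, ENNReal.ofReal (L ^ q) := by
      apply setLIntegral_mono' (measurableSet_Icc.inter measurableSet_Ioi)
      intro x hx
      apply ENNReal.ofReal_le_ofReal
      exact Real.rpow_le_rpow_of_nonpos hL (by linarith [hx.1.1]) hq0.le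
    refine le_trans hbd ?_
    rw [setLIntegral_const]
    have hvol : volume (Icc A B ∩ Ioi 0) ≤ ENNReal.ofReal L := by
      refine le_trans (measure_mono inter_subset_left) ?_
      rw [Real.volume_Icc]
    have hLqq : 0 ≤ L ^ q := Real.rpow_nonneg hL.le _
    calc ENNReal.ofReal (L ^ q) * volume (Icc A B ∩ Ioi 0)
        ≤ ENNReal.ofReal (L ^ q) * ENNReal.ofReal L := mul_le_mul_right hvol _
      _ = ENNReal.ofReal (L ^ q * L) := (ENNReal.ofReal_mul hLqq).symm
      _ ≤ ENNReal.ofReal (((2:ℝ)^(q+1)/(q+1) + 1) * L^(q+1)) := by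
          apply ENNReal.ofReal_le_ofReal
          have heq : L ^ q * L = L ^ (q+1) := by
            nth_rewrite 2 [← Real.rpow_one L]
            rw [← Real.rpow_add hL]
          rw [heq]
          have h2q : 0 < (2:ℝ)^(q+1)/(q+1) := by positivity
          nlinarith

theorem lintegral_sup_gauss_enlargement_le (ν δ c κ : ℝ) (hν : -1 < ν)
    (hδ0 : 0 < δ) (hδ : δ < min (1/2) (ν + 1)) (hc : 0 < c) (hκ : 1 < κ) :
    ∃ C : ℝ, 0 < C ∧ ∀ a b : ℝ, 0 < a → a < b → ∀ y ∈ enl κ a b,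
      (∫⁻ x in enl (κ^2) a b,
          ⨆ (t : ℝ) (_ : 0 < t),
            (besselMeasure ν (Metric.ball x (Real.sqrt t)))⁻¹ *
              ENNReal.ofReal (t ^ δ * Real.exp (-(|x - y|^2) / (c * t)))
        ∂(besselMeasure ν))
      ≤ ENNReal.ofReal (C * (b - a) ^ (2 * δ)) := by
  have hδ1 : δ < 1/2 := lt_of_lt_of_le hδ (min_le_left _ _)
  have hδ2 : δ < ν + 1 := lt_of_lt_of_le hδ (min_le_right _ _)
  obtain ⟨Cp, hCp0, hCp⟩ := aux_pointwise_ennreal ν δ c hδ0 hδ1 hδ2 hc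
  obtain ⟨Cb, hCb0, hCb⟩ := lint_pos_rpow (2*δ-1) (by linarith) (by linarith)
  have hκ0 : 0 < κ := by linarith
  refine ⟨Cp * (1/δ + Cb) * (κ^2) ^ (2*δ), by
    have h9 : (0:ℝ) < (κ^2) ^ (2*δ) := Real.rpow_pos_of_pos (by positivity) _
    positivity, fun a b ha hab y hy => ?_⟩
  set A : ℝ := (a + b) / 2 - κ^2 * (b - a) / 2 with hA
  set B : ℝ := (a + b) / 2 + κ^2 * (b - a) / 2 with hB
  set L : ℝ := κ^2 * (b - a) with hLdef
  have hba0 : (0:ℝ) < b - a := by linarith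
  have hL : 0 < L := by rw [hLdef]; positivity
  have hABL : B - A = L := by rw [hA, hB, hLdef]; ring
  have hAB : A < B := by rw [hA, hB]; nlinarith
  have hEeq : enl (κ^2) a b = Icc A B := rfl
  have hmE : MeasurableSet (enl (κ^2) a b) := measurableSet_Icc
  have hyAB : y ∈ Icc A B := by
    obtain ⟨hy1, hy2⟩ := hy
    have hκκ : κ * (b-a) ≤ κ^2 * (b-a) := by nlinarith
    constructor
    · rw [hA]; have := hy1; linarith
    · rw [hB]; have := hy2; linarith
  -- notation for the integrand
  set F : ℝ → ENNReal := fun x =>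
    ⨆ (t : ℝ) (_ : 0 < t),
      (besselMeasure ν (Metric.ball x (Real.sqrt t)))⁻¹ *
        ENNReal.ofReal (t ^ δ * Real.exp (-(|x - y|^2) / (c * t))) with hF
  have hdmeas : Measurable fun x : ℝ => ENNReal.ofReal (x ^ (2*ν+1)) := by fun_prop
  have hrw : ∫⁻ x in enl (κ^2) a b, F x ∂(besselMeasure ν)
      = ∫⁻ x in Icc A B ∩ Ioi 0,
          ENNReal.ofReal (x ^ (2*ν+1)) * F x ∂volume := by
    rw [besselMeasure,
      setLIntegral_withDensity_eq_setLIntegral_mul_non_measurable _ hdmeas F hmE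
        (Filter.Eventually.of_forall fun x => ENNReal.ofReal_lt_top),
      hEeq, Measure.restrict_restrict measurableSet_Icc]
    rfl
  rw [hrw]
  -- a.e. pointwise bound
  have hae : ∀ᵐ x ∂(volume.restrict (Icc A B ∩ Ioi 0)),
      ENNReal.ofReal (x ^ (2*ν+1)) * F x
        ≤ ENNReal.ofReal (Cp * |x - y| ^ (2*δ-1)) + ENNReal.ofReal (Cp * x ^ (2*δ-1)) := by
    have h2 : ∀ᵐ x ∂(volume.restrict (Icc A B ∩ Ioi 0)), x ∈ Icc A B ∩ Ioi 0 :=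
      ae_restrict_mem (measurableSet_Icc.inter measurableSet_Ioi)
    have h3 : ∀ᵐ x ∂(volume.restrict (Icc A B ∩ Ioi 0)), x ≠ y := by
      apply ae_restrict_of_ae
      have hset : {x : ℝ | ¬ x ≠ y} = {y} := by ext z; simp
      rw [ae_iff, hset]
      exact measure_singleton y
    filter_upwards [h2, h3] with x hxE hxy
    refine le_trans (hCp x y hxE.2 hxy) ?_
    rw [mul_add]
    exact ENNReal.ofReal_add_le
  refine le_trans (lintegral_mono_ae hae) ?_
  have hm1 : Measurable fun x : ℝ => ENNReal.ofReal (Cp * |x - y| ^ (2*δ-1)) := by fun_prop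
  rw [lintegral_add_left hm1]
  -- first integral
  have hsub1 : Icc A B ∩ Ioi 0 ⊆ Icc (y - L) (y + L) := by
    intro x hx
    obtain ⟨⟨hx1, hx2⟩, _⟩ := hx
    obtain ⟨hy1, hy2⟩ := hyAB
    exact ⟨by linarith [hABL, hy1, hy2, hx1, hx2], by linarith [hABL, hy1, hy2, hx1, hx2]⟩
  have h2δ : (2*δ-1) + 1 = 2*δ := by ring
  have hI1 : ∫⁻ x in Icc A B ∩ Ioi 0, ENNReal.ofReal (Cp * |x - y| ^ (2*δ-1)) ∂volume
      ≤ ENNReal.ofReal Cp * ENNReal.ofReal (2 * (L^(2*δ)/(2*δ))) := by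
    have : ∀ x : ℝ, ENNReal.ofReal (Cp * |x - y| ^ (2*δ-1))
        = ENNReal.ofReal Cp * ENNReal.ofReal (|x - y| ^ (2*δ-1)) := fun x =>
      ENNReal.ofReal_mul hCp0.le
    simp_rw [this]
    rw [lintegral_const_mul' _ _ ENNReal.ofReal_ne_top]
    apply mul_le_mul_right
    refine le_trans (lintegral_mono_set hsub1) ?_
    have := lint_abs_rpow (2*δ-1) L y (by linarith) hL
    rw [h2δ] at this
    exact this
  have hI2 : ∫⁻ x in Icc A B ∩ Ioi 0, ENNReal.ofReal (Cp * x ^ (2*δ-1)) ∂volume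
      ≤ ENNReal.ofReal Cp * ENNReal.ofReal (Cb * L^(2*δ)) := by
    have : ∀ x : ℝ, ENNReal.ofReal (Cp * x ^ (2*δ-1))
        = ENNReal.ofReal Cp * ENNReal.ofReal (x ^ (2*δ-1)) := fun x =>
      ENNReal.ofReal_mul hCp0.le
    simp_rw [this]
    rw [lintegral_const_mul' _ _ ENNReal.ofReal_ne_top]
    apply mul_le_mul_right
    have := hCb A B hAB
    rw [h2δ, hABL] at this
    exact this
  refine le_trans (add_le_add hI1 hI2) ?_
  rw [← ENNReal.ofReal_mul hCp0.le, ← ENNReal.ofReal_mul hCp0.le,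
    ← ENNReal.ofReal_add (by positivity) (by positivity)]
  apply ENNReal.ofReal_le_ofReal
  have hLrpow : L ^ (2*δ) = (κ^2) ^ (2*δ) * (b-a) ^ (2*δ) := by
    rw [hLdef, Real.mul_rpow (by positivity) (by linarith)]
  rw [hLrpow]
  have hba : 0 < (b-a) ^ (2*δ) := Real.rpow_pos_of_pos (by linarith) _
  have hκ2 : 0 < (κ^2:ℝ) ^ (2*δ) := Real.rpow_pos_of_pos (by positivity) _
  field_simp
  ring_nf
  nlinarith [hba, hκ2, hCb0, hCp0]
end

section
/- Let ν ≥ −1/2, ε ∈ (0, 2ν+2), and c > 0. Then there exists C > 0 such that for all x, y > 0, sup_{t>0} μ_ν(B(x,√t))^{-1} · exp(−|x−y|²/(ct)) · |x−y|^ε · x^{2ν+1} ≤ C·min(x, |x−y|)^{ε−1}, where μ_ν(B(x,√t)) is the μ_ν-measure of the interval (max(x−√t,0), x+√t) with μ_ν of density z^{2ν+1}. -/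
open MeasureTheory Set

lemma aux_rpow_exp (a : ℝ) (ha : 0 < a) : ∃ K : ℝ, 0 < K ∧
    ∀ u : ℝ, 0 < u → u ^ a * Real.exp (-u) ≤ K := by
  set n := ⌈a⌉₊ with hn
  refine ⟨(n.factorial : ℝ), by positivity, fun u hu => ?_⟩
  rcases le_or_gt 1 u with h1 | h1
  · have h2 : u ^ a ≤ u ^ (n : ℝ) :=
      Real.rpow_le_rpow_of_exponent_le h1 (Nat.le_ceil a)
    have h3 : u ^ (n:ℕ) ≤ (n.factorial : ℝ) * Real.exp u := by
      have := Real.pow_div_factorial_le_exp (x := u) hu.le n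
      rw [div_le_iff₀ (by positivity)] at this
      linarith [this]
    calc u ^ a * Real.exp (-u) ≤ u ^ (n:ℝ) * Real.exp (-u) :=
          mul_le_mul_of_nonneg_right h2 (Real.exp_pos _).le
      _ = u ^ (n:ℕ) * Real.exp (-u) := by rw [Real.rpow_natCast]
      _ ≤ ((n.factorial : ℝ) * Real.exp u) * Real.exp (-u) :=
          mul_le_mul_of_nonneg_right h3 (Real.exp_pos _).le
      _ = (n.factorial : ℝ) := by
          rw [mul_assoc, ← Real.exp_add]; simp
  · have h2 : u ^ a ≤ 1 := Real.rpow_le_one hu.le h1.le ha.le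
    have h3 : Real.exp (-u) ≤ 1 := Real.exp_le_one_iff.mpr (by linarith)
    have h4 : u ^ a * Real.exp (-u) ≤ 1 := by
      nlinarith [Real.exp_pos (-u), Real.rpow_pos_of_pos hu a]
    have h5 : (1:ℝ) ≤ (n.factorial : ℝ) := by
      exact_mod_cast Nat.one_le_iff_ne_zero.mpr n.factorial_ne_zero
    linarith

lemma aux_exp_bound_s9 (a c : ℝ) (ha : 0 < a) (hc : 0 < c) : ∃ K : ℝ, 0 < K ∧
    ∀ s r : ℝ, 0 < s → 0 < r →
      Real.exp (-(s^2) / (c * r^2)) ≤ K * (r / s) ^ (2*a) := by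
  obtain ⟨K0, hK0, hK⟩ := aux_rpow_exp a ha
  refine ⟨K0 * c ^ a, by positivity, fun s r hs hr => ?_⟩
  set u : ℝ := s^2 / (c * r^2) with hu
  have hu0 : 0 < u := by positivity
  have h1 := hK u hu0
  have hupos := Real.rpow_pos_of_pos hu0 a
  have h2 : Real.exp (-u) ≤ K0 * (u ^ a)⁻¹ := by
    rw [le_mul_inv_iff₀ hupos, mul_comm]; exact h1
  have h3 : (u ^ a)⁻¹ = c ^ a * (r/s) ^ (2*a) := by
    rw [← Real.inv_rpow hu0.le]
    have huinv : u⁻¹ = c * (r/s)^(2:ℕ) := by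
      rw [hu]; field_simp
    rw [huinv, Real.mul_rpow hc.le (by positivity),
      ← Real.rpow_natCast (r/s) 2, ← Real.rpow_mul (by positivity)]
    norm_num
  calc Real.exp (-(s^2) / (c * r^2)) = Real.exp (-u) := by rw [hu, neg_div]
    _ ≤ K0 * (u ^ a)⁻¹ := h2
    _ = K0 * c ^ a * (r/s) ^ (2*a) := by rw [h3]; ring

lemma bessel_lower (ν : ℝ) (hν : 0 ≤ 2*ν+1) (x r : ℝ) (hx : 0 < x) (hr : 0 < r) :
    ENNReal.ofReal ((r/2) * ((x+r)/2) ^ (2*ν+1)) ≤ besselMeasure ν (Metric.ball x r) := by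
  have hmb : MeasurableSet (Metric.ball x r) := measurableSet_ball
  rw [besselMeasure, withDensity_apply _ hmb, Measure.restrict_restrict hmb]
  have hsub : Ioo (x + r/2) (x + r) ⊆ Metric.ball x r ∩ Ioi 0 := by
    intro z hz
    obtain ⟨hz1, hz2⟩ := hz
    constructor
    · rw [Metric.mem_ball, Real.dist_eq, abs_lt]; constructor <;> linarith
    · simp only [mem_Ioi]; linarith
  calc ENNReal.ofReal ((r/2) * ((x+r)/2) ^ (2*ν+1))
      = ENNReal.ofReal (((x+r)/2) ^ (2*ν+1)) * volume (Ioo (x + r/2) (x + r)) := by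
        rw [Real.volume_Ioo, show x + r - (x + r/2) = r/2 by ring,
          ← ENNReal.ofReal_mul (by positivity), mul_comm]
    _ = ∫⁻ z in Ioo (x + r/2) (x + r), ENNReal.ofReal (((x+r)/2) ^ (2*ν+1)) := by
        rw [setLIntegral_const]
    _ ≤ ∫⁻ z in Ioo (x + r/2) (x + r), ENNReal.ofReal (z ^ (2*ν+1)) := by
        refine setLIntegral_mono (by fun_prop) (fun z hz => ?_)
        apply ENNReal.ofReal_le_ofReal
        exact Real.rpow_le_rpow (by positivity) (by obtain ⟨h1,h2⟩ := hz; linarith) hν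
    _ ≤ ∫⁻ z in Metric.ball x r ∩ Ioi 0, ENNReal.ofReal (z ^ (2*ν+1)) :=
        lintegral_mono_set hsub

set_option maxHeartbeats 1000000

theorem sup_gauss_pointwise_bound (ν ε c : ℝ) (hν : -1/2 ≤ ν)
    (hε0 : 0 < ε) (hε : ε < 2 * ν + 2) (hc : 0 < c) :
    ∃ C : ℝ, 0 < C ∧ ∀ x y t : ℝ, 0 < x → 0 < y → 0 < t →
      (besselMeasure ν (Metric.ball x (Real.sqrt t))).toReal⁻¹ *
          Real.exp (-(|x - y|^2) / (c * t)) * |x - y| ^ ε * x ^ (2 * ν + 1)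
        ≤ C * (min x |x - y|) ^ (ε - 1) := by
  obtain ⟨K1, hK1, hB1⟩ := aux_exp_bound_s9 (ν + 1) c (by linarith) hc
  obtain ⟨K2, hK2, hB2⟩ := aux_exp_bound_s9 (1/2 : ℝ) c (by norm_num) hc
  refine ⟨2 ^ (2*ν+2) * (K1 + K2), by positivity, fun x y t hx hy ht => ?_⟩
  set s : ℝ := |x - y| with hsdef
  by_cases hs0 : s = 0
  · rw [hs0, Real.zero_rpow hε0.ne']
    have h1 : 0 ≤ min x (0:ℝ) := le_min hx.le le_rfl
    have h2 : (0:ℝ) ≤ 2 ^ (2*ν+2) * (K1 + K2) * min x 0 ^ (ε - 1) := by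
      apply mul_nonneg (by positivity) (Real.rpow_nonneg h1 _)
    simpa using h2
  have hs : 0 < s := lt_of_le_of_ne (abs_nonneg _) (Ne.symm hs0)
  set r : ℝ := Real.sqrt t with hrdef
  have hr : 0 < r := Real.sqrt_pos.mpr ht
  have hrt : r ^ 2 = t := Real.sq_sqrt ht.le
  have hν1 : (0:ℝ) ≤ 2*ν+1 := by linarith
  set P : ℝ := ((x+r)/2) ^ (2*ν+1) with hPdef
  have hP : 0 < P := Real.rpow_pos_of_pos (by positivity) _
  set D : ℝ := (r/2) * P with hDdef
  have hD : 0 < D := by positivity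
  have hTinv : (besselMeasure ν (Metric.ball x r)).toReal⁻¹ ≤ D⁻¹ := by
    by_cases htop : besselMeasure ν (Metric.ball x r) = ⊤
    · rw [htop]; simp; positivity
    · have h := (ENNReal.ofReal_le_iff_le_toReal htop).mp (bessel_lower ν hν1 x r hx hr)
      exact inv_anti₀ hD h
  have hT0 : (0:ℝ) ≤ (besselMeasure ν (Metric.ball x r)).toReal⁻¹ := by positivity
  have hEarg : -(s^2) / (c * t) = -(s^2) / (c * r^2) := by rw [hrt]
  have hE : 0 < Real.exp (-(s^2) / (c * t)) := Real.exp_pos _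
  have hsε : 0 < s ^ ε := Real.rpow_pos_of_pos hs _
  have hxp : 0 < x ^ (2*ν+1) := Real.rpow_pos_of_pos hx _
  have step1 : (besselMeasure ν (Metric.ball x r)).toReal⁻¹ *
      Real.exp (-(s^2) / (c * t)) * s ^ ε * x ^ (2*ν+1)
      ≤ D⁻¹ * Real.exp (-(s^2) / (c * t)) * s ^ ε * x ^ (2*ν+1) := by
    gcongr
  refine le_trans step1 ?_
  rcases le_total x s with hxs | hxs
  · -- case x ≤ s : min = x
    rw [min_eq_left hxs]
    have hE1 : Real.exp (-(s^2) / (c * t)) ≤ K1 * (r/s) ^ (2*(ν+1)) := by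
      rw [hEarg]; exact hB1 s r hs hr
    have hDlow : (r/2) ^ (2*ν+2) ≤ D := by
      have h1 : (r/2) ^ (2*ν+1) ≤ P := by
        rw [hPdef]
        exact Real.rpow_le_rpow (by positivity) (by linarith) hν1
      calc (r/2) ^ (2*ν+2) = (r/2) * (r/2) ^ (2*ν+1) := by
            rw [show (2*ν+2:ℝ) = (2*ν+1)+1 by ring,
              Real.rpow_add_one (ne_of_gt (by positivity))]
            ring
        _ ≤ (r/2) * P := mul_le_mul_of_nonneg_left h1 (by positivity)
        _ = D := hDdef.symm
    have hDinv : D⁻¹ ≤ ((r/2) ^ (2*ν+2))⁻¹ :=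
      inv_anti₀ (by positivity) hDlow
    have step2 : D⁻¹ * Real.exp (-(s^2) / (c * t)) * s ^ ε * x ^ (2*ν+1)
        ≤ ((r/2) ^ (2*ν+2))⁻¹ * (K1 * (r/s) ^ (2*(ν+1))) * s ^ ε * x ^ (2*ν+1) := by
      gcongr
    refine le_trans step2 ?_
    have e1 : ((r/2) ^ (2*ν+2))⁻¹ * (r/s) ^ (2*ν+2)
        = 2 ^ (2*ν+2) * s ^ (-(2*ν+2)) := by
      rw [← Real.inv_rpow (by positivity),
        ← Real.mul_rpow (by positivity) (by positivity),
        show ((r/2)⁻¹ * (r/s) : ℝ) = 2 * s⁻¹ by field_simp,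
        Real.mul_rpow (by norm_num) (by positivity),
        Real.inv_rpow hs.le, ← Real.rpow_neg hs.le]
    have e2 : s ^ (-(2*ν+2)) * s ^ ε = s ^ (ε - (2*ν+2)) := by
      rw [← Real.rpow_add hs]; ring_nf
    have key : ((r/2) ^ (2*ν+2))⁻¹ * (K1 * (r/s) ^ (2*(ν+1))) * s ^ ε * x ^ (2*ν+1)
        = K1 * (2 ^ (2*ν+2) * (s ^ (ε - (2*ν+2)) * x ^ (2*ν+1))) := by
      rw [show (2*(ν+1) : ℝ) = 2*ν+2 by ring]
      calc ((r/2) ^ (2*ν+2))⁻¹ * (K1 * (r/s) ^ (2*ν+2)) * s ^ ε * x ^ (2*ν+1)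
          = K1 * ((((r/2) ^ (2*ν+2))⁻¹ * (r/s) ^ (2*ν+2)) * s ^ ε) * x ^ (2*ν+1) := by
            ring
        _ = K1 * ((2 ^ (2*ν+2) * s ^ (-(2*ν+2))) * s ^ ε) * x ^ (2*ν+1) := by rw [e1]
        _ = K1 * (2 ^ (2*ν+2) * (s ^ (-(2*ν+2)) * s ^ ε)) * x ^ (2*ν+1) := by ring
        _ = K1 * (2 ^ (2*ν+2) * s ^ (ε - (2*ν+2))) * x ^ (2*ν+1) := by rw [e2]
        _ = K1 * (2 ^ (2*ν+2) * (s ^ (ε - (2*ν+2)) * x ^ (2*ν+1))) := by ring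
    rw [key]
    have hmono : s ^ (ε - (2*ν+2)) ≤ x ^ (ε - (2*ν+2)) :=
      Real.rpow_le_rpow_of_nonpos hx hxs (by linarith)
    have hxcomb : x ^ (ε - (2*ν+2)) * x ^ (2*ν+1) = x ^ (ε - 1) := by
      rw [← Real.rpow_add hx]; ring_nf
    calc K1 * (2 ^ (2*ν+2) * (s ^ (ε - (2*ν+2)) * x ^ (2*ν+1)))
        ≤ K1 * (2 ^ (2*ν+2) * (x ^ (ε - (2*ν+2)) * x ^ (2*ν+1))) := by
          gcongr
      _ = 2 ^ (2*ν+2) * K1 * x ^ (ε - 1) := by rw [hxcomb]; ring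
      _ ≤ 2 ^ (2*ν+2) * (K1 + K2) * x ^ (ε - 1) := by
          have h2 : (0:ℝ) < (2:ℝ) ^ (2*ν+2) := by positivity
          have h3 : (2:ℝ) ^ (2*ν+2) * K1 ≤ 2 ^ (2*ν+2) * (K1 + K2) := by nlinarith
          exact mul_le_mul_of_nonneg_right h3 (Real.rpow_nonneg hx.le _)
  · -- case s ≤ x : min = s
    rw [min_eq_right hxs]
    have hE2 : Real.exp (-(s^2) / (c * t)) ≤ K2 * (r/s) := by
      have := hB2 s r hs hr
      rw [hEarg]
      simpa [Real.rpow_one] using this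
    have hx2 : x ^ (2*ν+1) ≤ 2 ^ (2*ν+1) * P := by
      rw [hPdef, ← Real.mul_rpow (by norm_num) (by positivity),
        show (2 * ((x+r)/2) : ℝ) = x + r by ring]
      exact Real.rpow_le_rpow hx.le (by linarith) hν1
    have step2 : D⁻¹ * Real.exp (-(s^2) / (c * t)) * s ^ ε * x ^ (2*ν+1)
        ≤ D⁻¹ * (K2 * (r/s)) * s ^ ε * (2 ^ (2*ν+1) * P) := by
      gcongr
    refine le_trans step2 ?_
    have key : D⁻¹ * (K2 * (r/s)) * s ^ ε * (2 ^ (2*ν+1) * P)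
        = 2 * 2 ^ (2*ν+1) * K2 * (s⁻¹ * s ^ ε) := by
      rw [hDdef]
      field_simp
    rw [key]
    have hscomb : s⁻¹ * s ^ ε = s ^ (ε - 1) := by
      rw [show s⁻¹ = s ^ (-1 : ℝ) by rw [Real.rpow_neg_one], ← Real.rpow_add hs]
      ring_nf
    rw [hscomb]
    have h2pow : (2:ℝ) ^ (2*ν+2) = 2 * 2 ^ (2*ν+1) := by
      rw [show (2*ν+2 : ℝ) = (2*ν+1)+1 by ring,
        Real.rpow_add_one (by norm_num : (2:ℝ) ≠ 0)]
      ring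
    have h2 : (0:ℝ) < (2:ℝ) ^ (2*ν+1) := by positivity
    have h3 : (2:ℝ) * 2 ^ (2*ν+1) * K2 ≤ 2 ^ (2*ν+2) * (K1 + K2) := by
      rw [h2pow]; nlinarith
    exact mul_le_mul_of_nonneg_right h3 (Real.rpow_nonneg hs.le _)
end

section
/- Let ν > 0, let 0 < γ < min(1/2, ν), and let δ ∈ (−γ, γ). Define K_{t,ν}(x,y) = (2t)^{-1} y^ν x^{−3ν} I_ν(xy/(2t)) exp(−(x²+y²)/(4t)). Then there exists C > 0 such that for every dyadic interval Q = [2^n, 2^{n+1}] and every y ∈ Q*, ∫_{((Q**)^c)} sup_{t>0} t^δ · K_{t,ν}(x,y) dμ_ν(x) ≤ C·d_Q^{2δ}, where dμ_ν(x) = x^{2ν+1} dx, d_Q = 2^n, and Q*, Q** are fixed concentric enlargements of Q. -/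
open MeasureTheory Set

/-- The modified Bessel function of the first kind of order `ν`. -/
noncomputable def besselI (ν x : ℝ) : ℝ :=
  ∑' m : ℕ, (x / 2) ^ (2 * (m:ℝ) + ν) / ((m.factorial : ℝ) * Real.Gamma ((m:ℝ) + ν + 1))

/-- The kernel `K_{t,ν}(x,y) = (2t)⁻¹ y^ν x^{-3ν} I_ν(xy/(2t)) exp(-(x²+y²)/(4t))`. -/
noncomputable def Kker (ν t x y : ℝ) : ℝ :=
  (2 * t)⁻¹ * y ^ ν * x ^ (-(3 * ν)) * besselI ν (x * y / (2 * t)) *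
    Real.exp (-((x^2 + y^2) / (4 * t)))

open scoped ENNReal


lemma fact_gamma_le (ν : ℝ) (hν : 0 < ν) : ∀ m : ℕ,
    (m.factorial : ℝ) * Real.Gamma (ν + 1) ≤ Real.Gamma ((m : ℝ) + ν + 1) := by
  intro m
  induction m with
  | zero => simp
  | succ k ih =>
      have hpos : (0:ℝ) < (k:ℝ) + ν + 1 := by positivity
      have h1 : ((k:ℝ) + 1) + ν + 1 = ((k:ℝ) + ν + 1) + 1 := by ring
      push_cast [Nat.factorial_succ]
      rw [h1, Real.Gamma_add_one hpos.ne']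
      have h2 : (0:ℝ) < Real.Gamma ((k:ℝ) + ν + 1) := Real.Gamma_pos_of_pos hpos
      have h3 : ((k:ℝ) + 1) ≤ (k:ℝ) + ν + 1 := by linarith
      calc ((k:ℝ)+1) * (k.factorial : ℝ) * Real.Gamma (ν+1)
          = ((k:ℝ)+1) * ((k.factorial : ℝ) * Real.Gamma (ν+1)) := by ring
        _ ≤ ((k:ℝ)+1) * Real.Gamma ((k:ℝ)+ν+1) := by
            apply mul_le_mul_of_nonneg_left ih (by positivity)
        _ ≤ ((k:ℝ)+ν+1) * Real.Gamma ((k:ℝ)+ν+1) := by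
            apply mul_le_mul_of_nonneg_right h3 h2.le

lemma two_mul_factorial_le (m : ℕ) : ((2*m).factorial : ℕ) ≤ 4^m * m.factorial^2 := by
  have h1 : (2*m).choose m * m.factorial * m.factorial = (2*m).factorial := by
    have := Nat.choose_mul_factorial_mul_factorial (show m ≤ 2*m by omega)
    simpa [two_mul, Nat.add_sub_cancel] using this
  have h2 : (2*m).choose m ≤ 4^m := by
    calc (2*m).choose m ≤ ∑ i ∈ Finset.range (2*m+1), (2*m).choose i :=
          Finset.single_le_sum (fun i _ => Nat.zero_le _) (by simp [Finset.mem_range]; omega)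
      _ = 2^(2*m) := Nat.sum_range_choose (2*m)
      _ = 4^m := by rw [pow_mul]; norm_num
  calc (2*m).factorial = (2*m).choose m * m.factorial * m.factorial := h1.symm
    _ ≤ 4^m * m.factorial * m.factorial := by
        exact Nat.mul_le_mul_right _ (Nat.mul_le_mul_right _ h2)
    _ = 4^m * m.factorial^2 := by ring

lemma even_exp_sum_le (s : ℝ) (hs : 0 ≤ s) :
    ∑' m : ℕ, s^(2*m)/((2*m).factorial : ℝ) ≤ Real.exp s := by
  have hsumm : Summable (fun m : ℕ => s^(2*m)/((2*m).factorial : ℝ)) := by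
    exact (Real.summable_pow_div_factorial s).comp_injective
      (mul_right_injective₀ (two_ne_zero))
  apply Summable.tsum_le_of_sum_range_le hsumm
  intro n
  calc ∑ m ∈ Finset.range n, s^(2*m)/((2*m).factorial : ℝ)
      = ∑ i ∈ (Finset.range n).image (fun m => 2*m), s^i/(i.factorial : ℝ) := by
        rw [Finset.sum_image (fun a _ b _ h => by omega)]
    _ ≤ ∑ i ∈ Finset.range (2*n), s^i/(i.factorial : ℝ) := by
        apply Finset.sum_le_sum_of_subset_of_nonneg
        · intro i hi
          simp only [Finset.mem_image, Finset.mem_range] at hi ⊢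
          obtain ⟨m, hm, rfl⟩ := hi; omega
        · intro i _ _; positivity
    _ ≤ Real.exp s := Real.sum_le_exp_of_nonneg hs _

lemma besselI_le (ν : ℝ) (hν : 0 < ν) (s : ℝ) (hs : 0 < s) :
    besselI ν s ≤ (s/2)^ν * Real.exp s / Real.Gamma (ν+1) := by
  have hG : 0 < Real.Gamma (ν+1) := Real.Gamma_pos_of_pos (by linarith)
  have hs2 : (0:ℝ) < s/2 := by linarith
  set f : ℕ → ℝ := fun m => (s / 2) ^ (2 * (m:ℝ) + ν) / ((m.factorial : ℝ) * Real.Gamma ((m:ℝ) + ν + 1)) with hf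
  set g : ℕ → ℝ := fun m => (s/2)^ν / Real.Gamma (ν+1) * (s^(2*m)/((2*m).factorial : ℝ)) with hg
  have hfg : ∀ m, f m ≤ g m := by
    intro m
    have hGm : 0 < Real.Gamma ((m:ℝ)+ν+1) := Real.Gamma_pos_of_pos (by positivity)
    have hsplit : (s / 2) ^ (2 * (m:ℝ) + ν) = (s/2)^ν * (s/2)^(2*m) := by
      rw [Real.rpow_add hs2, mul_comm]
      congr 1
      rw [show (2 * (m:ℝ)) = ((2*m : ℕ) : ℝ) by push_cast; ring, Real.rpow_natCast]
    have hpow : (s/2:ℝ)^(2*m) = s^(2*m)/4^m := by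
      rw [div_pow, pow_mul, pow_mul]; norm_num
    have hkey : ((2*m).factorial : ℝ) * Real.Gamma (ν+1) ≤ 4^m * ((m.factorial : ℝ) * Real.Gamma ((m:ℝ)+ν+1)) := by
      have h1 : ((2*m).factorial : ℝ) ≤ 4^m * (m.factorial:ℝ)^2 := by
        exact_mod_cast Nat.cast_le.mpr (two_mul_factorial_le m)
      have h2 := fact_gamma_le ν hν m
      have hmf : (0:ℝ) < (m.factorial : ℝ) := by positivity
      nlinarith [pow_pos (show (0:ℝ) < 4 by norm_num) m, hG.le, hmf.le]
    have hfrac : (s/2:ℝ)^(2*m) / ((m.factorial : ℝ) * Real.Gamma ((m:ℝ)+ν+1))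
        ≤ s^(2*m) / ((2*m).factorial : ℝ) / Real.Gamma (ν+1) := by
      rw [hpow, div_div, div_div]
      apply div_le_div_of_nonneg_left (by positivity) (by positivity)
      exact hkey

    calc f m = (s/2)^ν * ((s/2:ℝ)^(2*m) / ((m.factorial : ℝ) * Real.Gamma ((m:ℝ)+ν+1))) := by
          rw [hf]; simp only []; rw [hsplit]; ring
      _ ≤ (s/2)^ν * (s^(2*m) / ((2*m).factorial : ℝ) / Real.Gamma (ν+1)) := by
          apply mul_le_mul_of_nonneg_left hfrac (by positivity)
      _ = g m := by rw [hg]; simp only []; ring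
  have hgsum : Summable g := by
    apply Summable.mul_left
    exact (Real.summable_pow_div_factorial s).comp_injective (mul_right_injective₀ two_ne_zero)
  have hfsum : Summable f := by
    apply Summable.of_nonneg_of_le (fun m => by positivity) hfg hgsum
  calc besselI ν s = ∑' m, f m := rfl
    _ ≤ ∑' m, g m := Summable.tsum_le_tsum hfg hfsum hgsum
    _ = (s/2)^ν / Real.Gamma (ν+1) * ∑' m, s^(2*m)/((2*m).factorial : ℝ) := tsum_mul_left
    _ ≤ (s/2)^ν / Real.Gamma (ν+1) * Real.exp s := by
        apply mul_le_mul_of_nonneg_left (even_exp_sum_le s hs.le) (by positivity)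
    _ = (s/2)^ν * Real.exp s / Real.Gamma (ν+1) := by ring

lemma besselI_nonneg (ν : ℝ) (hν : 0 < ν) (s : ℝ) (hs : 0 < s) : 0 ≤ besselI ν s := by
  apply tsum_nonneg
  intro m
  have hGm : 0 < Real.Gamma ((m:ℝ)+ν+1) := Real.Gamma_pos_of_pos (by positivity)
  have : (0:ℝ) < s / 2 := by linarith
  positivity

lemma rpow_mul_exp_neg_le (β : ℝ) (hβ : 0 < β) :
    ∃ Cβ : ℝ, 0 < Cβ ∧ ∀ u : ℝ, 0 < u → u^β * Real.exp (-u) ≤ Cβ := by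
  refine ⟨(Nat.ceil β).factorial, by positivity, fun u hu => ?_⟩
  have hf1 : (1:ℝ) ≤ (Nat.ceil β).factorial := by exact_mod_cast Nat.factorial_pos _
  rcases le_or_gt u 1 with h | h
  · have h1 : u^β ≤ 1 := Real.rpow_le_one hu.le h hβ.le
    have h2 : Real.exp (-u) ≤ 1 := Real.exp_le_one_iff.mpr (by linarith)
    nlinarith [Real.exp_pos (-u), Real.rpow_nonneg hu.le β]
  · set k := Nat.ceil β with hk
    have hβk : β ≤ (k:ℝ) := Nat.le_ceil β
    have h1 : u^β ≤ u^(k:ℝ) := Real.rpow_le_rpow_of_exponent_le h.le hβk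
    have h2 : u^(k:ℕ) ≤ (k.factorial : ℝ) * Real.exp u := by
      have hsingle : u^(k:ℕ)/(k.factorial : ℝ) ≤ ∑ i ∈ Finset.range (k+1), u^i/(i.factorial:ℝ) := by
        apply Finset.single_le_sum (f := fun i => u^i/(i.factorial:ℝ))
          (fun i _ => by positivity) (Finset.self_mem_range_succ k)
      have := le_trans hsingle (Real.sum_le_exp_of_nonneg (by linarith) (k+1))
      have hfpos : (0:ℝ) < (k.factorial : ℝ) := by positivity
      rw [div_le_iff₀ hfpos] at this
      linarith [this]
    rw [Real.rpow_natCast] at h1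
    have h3 : u^β * Real.exp (-u) ≤ ((k.factorial : ℝ) * Real.exp u) * Real.exp (-u) := by
      apply mul_le_mul (le_trans h1 h2) (le_refl _) (Real.exp_pos _).le (by positivity)
    rwa [mul_assoc, ← Real.exp_add, add_neg_cancel, Real.exp_zero, mul_one] at h3

lemma kker_pointwise (ν δ : ℝ) (hν : 0 < ν) (hδν : δ < 1 + ν) :
    ∃ C : ℝ, 0 < C ∧ ∀ t x y : ℝ, 0 < t → 0 < x → 0 < y → x ≠ y →
      t^δ * Kker ν t x y ≤ C * (y^(2*ν) * x^(-(2*ν)) * ((x-y)^2)^(δ-1-ν)) := by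
  set β := 1 + ν - δ with hβdef
  have hβ : 0 < β := by simp only [hβdef]; linarith
  obtain ⟨Cβ, hCβ, hCb⟩ := rpow_mul_exp_neg_le β hβ
  have hG : 0 < Real.Gamma (ν+1) := Real.Gamma_pos_of_pos (by linarith)
  refine ⟨Cβ * (4:ℝ)^β * (2 * (4:ℝ)^ν * Real.Gamma (ν+1))⁻¹, by positivity, ?_⟩
  intro t x y ht hx hy hxy
  set G := Real.Gamma (ν+1)
  set s := x * y / (2 * t) with hs
  have hspos : 0 < s := by positivity
  -- Step 1: bound Kker
  have step1 : Kker ν t x y ≤ (2 * (4:ℝ)^ν * G)⁻¹ * y^(2*ν) * x^(-(2*ν)) * t^(-(1+ν)) *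
      Real.exp (-((x-y)^2 / (4*t))) := by
    have hI := besselI_le ν hν s hspos
    have hP : 0 < (2 * t)⁻¹ * y ^ ν * x ^ (-(3 * ν)) := by positivity
    have hE : 0 < Real.exp (-((x^2 + y^2) / (4 * t))) := Real.exp_pos _
    have h1 : Kker ν t x y ≤ (2 * t)⁻¹ * y ^ ν * x ^ (-(3 * ν)) *
        ((s/2)^ν * Real.exp s / G) * Real.exp (-((x^2 + y^2) / (4 * t))) := by
      unfold Kker
      apply mul_le_mul_of_nonneg_right _ hE.le
      exact mul_le_mul_of_nonneg_left hI hP.le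
    refine h1.trans_eq ?_
    have hs2 : s / 2 = x * y / (4 * t) := by rw [hs]; ring
    have hsplit : (s/2)^ν = x^ν * y^ν * ((4:ℝ)^ν)⁻¹ * (t^ν)⁻¹ := by
      rw [hs2, Real.div_rpow (by positivity) (by positivity),
        Real.mul_rpow hx.le hy.le, Real.mul_rpow (by norm_num) ht.le,
        div_eq_mul_inv, mul_inv]
      ring
    have hexp : Real.exp s * Real.exp (-((x^2 + y^2) / (4 * t))) =
        Real.exp (-((x-y)^2 / (4*t))) := by
      rw [← Real.exp_add]
      congr 1
      rw [hs]
      field_simp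
      ring
    have hyy : y^ν * y^ν = y^(2*ν) := by
      rw [← Real.rpow_add hy]; ring_nf
    have hxx : x^(-(3*ν)) * x^ν = x^(-(2*ν)) := by
      rw [← Real.rpow_add hx]; ring_nf
    have htt : (2*t)⁻¹ * (t^ν)⁻¹ = 2⁻¹ * t^(-(1+ν)) := by
      rw [show -(1+ν) = (-1) + (-ν) by ring, Real.rpow_add ht, Real.rpow_neg_one,
        Real.rpow_neg ht.le, mul_inv]
      ring
    calc (2 * t)⁻¹ * y ^ ν * x ^ (-(3 * ν)) * ((s/2)^ν * Real.exp s / G) *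
          Real.exp (-((x^2 + y^2) / (4 * t)))
        = ((2*t)⁻¹ * (t^ν)⁻¹) * (y^ν * y^ν) * (x^(-(3*ν)) * x^ν) * ((4:ℝ)^ν)⁻¹ * G⁻¹ *
            (Real.exp s * Real.exp (-((x^2 + y^2) / (4 * t)))) := by
          rw [hsplit]; ring
      _ = (2 * (4:ℝ)^ν * G)⁻¹ * y^(2*ν) * x^(-(2*ν)) * t^(-(1+ν)) *
            Real.exp (-((x-y)^2 / (4*t))) := by
          rw [hyy, hxx, htt, hexp, mul_inv, mul_inv]; ring
  -- Step 2: the t-supremum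
  have step2 : t^δ * t^(-(1+ν)) * Real.exp (-((x-y)^2 / (4*t))) ≤
      Cβ * (4:ℝ)^β * ((x-y)^2)^(δ-1-ν) := by
    set a := (x-y)^2/4 with ha
    have hxypos : 0 < (x-y)^2 := pow_two_pos_of_ne_zero (sub_ne_zero.mpr hxy)
    have hapos : 0 < a := by positivity
    have h1 : t^δ * t^(-(1+ν)) = t^(-β) := by
      rw [← Real.rpow_add ht]; congr 1; rw [hβdef]; ring
    have h2 : (x-y)^2 / (4*t) = a/t := by rw [ha]; ring
    set u := a/t with hu
    have hupos : 0 < u := by positivity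
    have h3 : t^(-β) = u^β * a^(-β) := by
      have huab : u^β = a^β / t^β := by rw [hu, Real.div_rpow hapos.le ht.le]
      have hta : (0:ℝ) < t^β := Real.rpow_pos_of_pos ht β
      have haa : (0:ℝ) < a^β := Real.rpow_pos_of_pos hapos β
      rw [Real.rpow_neg ht.le, Real.rpow_neg hapos.le, huab]
      field_simp
    have h4 : a^(-β) = ((x-y)^2)^(δ-1-ν) * (4:ℝ)^β := by
      have : a^(-β) = ((x-y)^2)^(-β) / (4:ℝ)^(-β) := by
        rw [ha, Real.div_rpow hxypos.le (by norm_num)]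
      rw [this, Real.rpow_neg (by norm_num : (0:ℝ) ≤ 4), div_eq_mul_inv, inv_inv]
      congr 2
      rw [hβdef]; ring
    calc t^δ * t^(-(1+ν)) * Real.exp (-((x-y)^2 / (4*t)))
        = t^(-β) * Real.exp (-u) := by rw [h1, h2]
      _ = (u^β * Real.exp (-u)) * a^(-β) := by rw [h3]; ring
      _ ≤ Cβ * a^(-β) := by
          apply mul_le_mul_of_nonneg_right (hCb u hupos) (Real.rpow_nonneg hapos.le _)
      _ = Cβ * (4:ℝ)^β * ((x-y)^2)^(δ-1-ν) := by rw [h4]; ring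
  -- combine
  have hR : 0 ≤ y^(2*ν) * x^(-(2*ν)) := by positivity
  calc t^δ * Kker ν t x y
      ≤ t^δ * ((2 * (4:ℝ)^ν * G)⁻¹ * y^(2*ν) * x^(-(2*ν)) * t^(-(1+ν)) *
          Real.exp (-((x-y)^2 / (4*t)))) := by
        apply mul_le_mul_of_nonneg_left step1 (Real.rpow_nonneg ht.le δ)
    _ = (2 * (4:ℝ)^ν * G)⁻¹ * (y^(2*ν) * x^(-(2*ν))) *
          (t^δ * t^(-(1+ν)) * Real.exp (-((x-y)^2 / (4*t)))) := by ring
    _ ≤ (2 * (4:ℝ)^ν * G)⁻¹ * (y^(2*ν) * x^(-(2*ν))) * (Cβ * (4:ℝ)^β * ((x-y)^2)^(δ-1-ν)) := by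
        apply mul_le_mul_of_nonneg_left step2 (by positivity)
    _ = Cβ * (4:ℝ)^β * (2 * (4:ℝ)^ν * G)⁻¹ * (y^(2*ν) * x^(-(2*ν)) * ((x-y)^2)^(δ-1-ν)) := by
        ring

set_option maxHeartbeats 1000000 in
theorem Kker_complement_integral_bound (ν γ δ κ : ℝ) (hν : 0 < ν)
    (hγ0 : 0 < γ) (hγ : γ < min (1/2) ν) (hδ : -γ < δ) (hδ' : δ < γ)
    (hκ : 1 < κ) (hκ2 : κ < 2) :
    ∃ C : ℝ, 0 < C ∧ ∀ n : ℤ, ∀ y ∈ enl κ ((2:ℝ)^n) ((2:ℝ)^(n+1)),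
      (∫⁻ x in (enl (κ^2) ((2:ℝ)^n) ((2:ℝ)^(n+1)))ᶜ,
          ⨆ (t : ℝ) (_ : 0 < t), ENNReal.ofReal (t ^ δ * Kker ν t x y)
        ∂(besselMeasure ν))
      ≤ ENNReal.ofReal (C * ((2:ℝ)^n) ^ (2 * δ)) := by
  have hγν : γ < ν := lt_of_lt_of_le hγ (min_le_right _ _)
  have hδν : δ < 1 + ν := by linarith
  have hδν2 : 0 < 2*ν - 2*δ := by linarith
  obtain ⟨C₁, hC₁, hpt⟩ := kker_pointwise ν δ hν hδν
  set c1 : ℝ := (κ^2 - κ)/2 with hc1def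
  set ε : ℝ := (κ^2 - κ)/(3 + κ^2) with hεdef
  have hκκ : 0 < κ^2 - κ := by nlinarith
  have hc1 : 0 < c1 := by rw [hc1def]; positivity
  have hε : 0 < ε := by rw [hεdef]; positivity
  have hden : (0:ℝ) < 3 + κ^2 := by positivity
  set A₁ : ℝ := C₁ * (((3+κ)/2)^(2*ν)) * ((c1^2)^(δ-1-ν)) with hA₁def
  set A₂ : ℝ := C₁ * (((3+κ)/2)^(2*ν)) * ((ε^2)^(δ-1-ν)) * (((3+κ^2)/2)^(2*δ-2*ν)) / (2*ν-2*δ)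
    with hA₂def
  have h3κ : (0:ℝ) < (3+κ)/2 := by linarith
  have hA₁pos : 0 < A₁ := by
    rw [hA₁def]; positivity
  have hA₂pos : 0 < A₂ := by
    rw [hA₂def]
    apply div_pos _ hδν2
    positivity
  refine ⟨A₁ + A₂, by positivity, ?_⟩
  intro n y hy
  set d : ℝ := (2:ℝ)^n with hddef
  have hd : 0 < d := by rw [hddef]; positivity
  have h2d : (2:ℝ)^(n+1) = d * 2 := by rw [hddef, zpow_add_one₀ (two_ne_zero)]
  set L : ℝ := (3-κ^2)/2*d with hLdef
  set Rr : ℝ := (3+κ^2)/2*d with hRdef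
  have hQ : enl (κ^2) d ((2:ℝ)^(n+1)) = Icc L Rr := by
    unfold enl
    rw [h2d, hLdef, hRdef]
    congr 1 <;> ring
  -- bounds on y
  have hylb : (3-κ)/2*d ≤ y := by
    have h1 := hy.1
    rw [h2d] at h1
    have h2 : (d + d*2)/2 - κ*(d*2 - d)/2 = (3-κ)/2*d := by ring
    linarith [h2 ▸ h1]
  have hyub : y ≤ (3+κ)/2*d := by
    have h1 := hy.2
    rw [h2d] at h1
    have h2 : (d + d*2)/2 + κ*(d*2 - d)/2 = (3+κ)/2*d := by ring
    linarith [h2 ▸ h1]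
  have hy0 : 0 < y := lt_of_lt_of_le (mul_pos (by linarith) hd) hylb
  have hyIcc : y ∈ Icc L Rr := by
    constructor
    · rw [hLdef]; nlinarith
    · rw [hRdef]; nlinarith
  have hR0 : 0 < Rr := by rw [hRdef]; positivity
  have hLd : L ≤ d := by rw [hLdef]; nlinarith
  set p : ℝ := 2*δ-1-2*ν with hpdef
  have hp : p < -1 := by rw [hpdef]; linarith
  set M₁ : ℝ := C₁ * (((3+κ)/2)^(2*ν) * d^(2*ν)) * ((c1^2)^(δ-1-ν) * (d^2)^(δ-1-ν)) * d
    with hM₁def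
  set M₂ : ℝ := C₁ * (((3+κ)/2)^(2*ν) * d^(2*ν)) * ((ε^2)^(δ-1-ν)) with hM₂def
  have hM₁0 : 0 ≤ M₁ := by rw [hM₁def]; positivity
  have hM₂0 : 0 ≤ M₂ := by rw [hM₂def]; positivity
  set Gf : ℝ → ℝ≥0∞ := fun x =>
    ENNReal.ofReal (C₁ * (y^(2*ν) * x^(-(2*ν)) * ((x-y)^2)^(δ-1-ν))) with hGfdef
  set w : ℝ → ℝ≥0∞ := fun x => ENNReal.ofReal (x ^ (2*ν+1)) with hwdef
  have hGmeas : Measurable Gf := by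
    rw [hGfdef]; fun_prop
  have hwmeas : Measurable w := by rw [hwdef]; fun_prop
  have hSmeas : MeasurableSet ((Icc L Rr)ᶜ) := measurableSet_Icc.compl
  -- d-power helpers
  have hdpow : ∀ a b : ℝ, d^a * d^b = d^(a+b) := fun a b => (Real.rpow_add hd a b).symm
  have hd2e : ((d^2 : ℝ))^(δ-1-ν) = d^(2*(δ-1-ν)) := by
    rw [← Real.rpow_natCast d 2, ← Real.rpow_mul hd.le]
    norm_num
  -- rewrite the domain
  rw [hQ]
  -- step A : pointwise bound under the integral
  have hmuIoi : (besselMeasure ν) ((Ioi (0:ℝ))ᶜ) = 0 := by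
    rw [besselMeasure, withDensity_apply _ measurableSet_Ioi.compl,
      Measure.restrict_restrict measurableSet_Ioi.compl, compl_inter_self,
      Measure.restrict_empty, lintegral_zero_measure]
  have h0ae : ∀ᵐ x ∂((besselMeasure ν).restrict (Icc L Rr)ᶜ), x ∈ Ioi (0:ℝ) := by
    apply ae_restrict_of_ae
    rw [ae_iff]
    exact measure_mono_null (fun x hx => hx) hmuIoi
  have hae : ∀ᵐ x ∂((besselMeasure ν).restrict (Icc L Rr)ᶜ),
      (⨆ (t : ℝ) (_ : 0 < t), ENNReal.ofReal (t ^ δ * Kker ν t x y)) ≤ Gf x := by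
    filter_upwards [h0ae, ae_restrict_mem hSmeas] with x hx0 hxS
    apply iSup_le; intro t; apply iSup_le; intro ht
    have hxney : x ≠ y := fun h => hxS (h ▸ hyIcc)
    exact ENNReal.ofReal_le_ofReal (hpt t x y ht hx0 hy0 hxney)
  calc ∫⁻ x in (Icc L Rr)ᶜ, ⨆ (t : ℝ) (_ : 0 < t), ENNReal.ofReal (t ^ δ * Kker ν t x y)
        ∂(besselMeasure ν)
      ≤ ∫⁻ x in (Icc L Rr)ᶜ, Gf x ∂(besselMeasure ν) := lintegral_mono_ae hae
    _ = ∫⁻ x in (Icc L Rr)ᶜ ∩ Ioi 0, w x * Gf x := by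
        rw [besselMeasure, restrict_withDensity hSmeas,
          lintegral_withDensity_eq_lintegral_mul _ hwmeas hGmeas,
          Measure.restrict_restrict hSmeas]
        rfl
    _ = ∫⁻ x in Ioo 0 L ∪ Ioi Rr, w x * Gf x := by
        have hsets : (Icc L Rr)ᶜ ∩ Ioi (0:ℝ) = Ioo 0 L ∪ Ioi Rr := by
          ext x
          simp only [mem_inter_iff, mem_compl_iff, mem_Icc, mem_union, mem_Ioi, mem_Ioo,
            not_and, not_le]
          constructor
          · rintro ⟨h, hx⟩
            rcases lt_or_ge x L with h1 | h1
            · exact Or.inl ⟨hx, h1⟩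
            · exact Or.inr (h h1)
          · rintro (⟨h0, hl⟩ | h)
            · exact ⟨fun hL => absurd hL (not_le.mpr hl), h0⟩
            · exact ⟨fun _ => h, lt_trans hR0 h⟩
        rw [hsets]
    _ ≤ (∫⁻ x in Ioo 0 L, w x * Gf x) + ∫⁻ x in Ioi Rr, w x * Gf x :=
        lintegral_union_le _ _ _
    _ ≤ ENNReal.ofReal (A₁ * d^(2*δ)) + ENNReal.ofReal (A₂ * d^(2*δ)) := by
        have hyb : y^(2*ν) ≤ ((3+κ)/2)^(2*ν) * d^(2*ν) := by
          rw [← Real.mul_rpow h3κ.le hd.le]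
          exact Real.rpow_le_rpow hy0.le hyub (by positivity)
        have hI1 : ∫⁻ x in Ioo 0 L, w x * Gf x ≤ ENNReal.ofReal (A₁ * d^(2*δ)) := by
          have hb : ∀ᵐ x ∂(volume.restrict (Ioo 0 L)), w x * Gf x ≤ ENNReal.ofReal M₁ := by
            filter_upwards [ae_restrict_mem measurableSet_Ioo] with x hx
            obtain ⟨hx0, hxL⟩ := hx
            rw [hwdef, hGfdef]
            simp only []
            rw [← ENNReal.ofReal_mul (Real.rpow_nonneg hx0.le _)]
            apply ENNReal.ofReal_le_ofReal
            have hxx : x^(2*ν+1) * x^(-(2*ν)) = x := by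
              rw [← Real.rpow_add hx0, show 2*ν+1 + -(2*ν) = (1:ℝ) by ring, Real.rpow_one]
            have hgap1 : (0:ℝ) < c1*d := by positivity
            have hgap2 : c1 * d ≤ y - x := by
              have hxL' : x < (3-κ^2)/2*d := by rw [← hLdef]; exact hxL
              rw [hc1def]
              linarith [hylb, hxL']
            have hgb : ((x-y)^2)^(δ-1-ν) ≤ (c1^2)^(δ-1-ν) * (d^2)^(δ-1-ν) := by
              rw [← Real.mul_rpow (by positivity) (by positivity)]
              apply Real.rpow_le_rpow_of_nonpos (by positivity) _ (by linarith)
              calc c1^2*d^2 = (c1*d)^2 := by ring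
                _ ≤ (y-x)^2 := pow_le_pow_left₀ hgap1.le hgap2 2
                _ = (x-y)^2 := by ring
            calc x^(2*ν+1) * (C₁ * (y^(2*ν) * x^(-(2*ν)) * ((x-y)^2)^(δ-1-ν)))
                = C₁ * y^(2*ν) * ((x-y)^2)^(δ-1-ν) * (x^(2*ν+1) * x^(-(2*ν))) := by ring
              _ = C₁ * y^(2*ν) * ((x-y)^2)^(δ-1-ν) * x := by rw [hxx]
              _ ≤ C₁ * (((3+κ)/2)^(2*ν) * d^(2*ν)) * ((c1^2)^(δ-1-ν) * (d^2)^(δ-1-ν)) * d := by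
                  gcongr <;>
                    first
                      | exact hyb
                      | exact hgb
                      | exact le_trans (le_of_lt hxL) hLd
              _ = M₁ := hM₁def.symm
          have hcollect : d^(2*ν) * d^(2*(δ-1-ν)) * d * d = d^(2*δ) := by
            rw [hdpow, ← Real.rpow_add_one hd.ne', ← Real.rpow_add_one hd.ne']
            congr 1; ring
          calc ∫⁻ x in Ioo 0 L, w x * Gf x ≤ ∫⁻ _ in Ioo 0 L, ENNReal.ofReal M₁ :=
              lintegral_mono_ae hb
            _ = ENNReal.ofReal M₁ * volume (Ioo 0 L) := setLIntegral_const _ _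
            _ ≤ ENNReal.ofReal M₁ * ENNReal.ofReal d := by
                rw [Real.volume_Ioo]
                exact mul_le_mul_right (ENNReal.ofReal_le_ofReal (by linarith)) _
            _ = ENNReal.ofReal (M₁ * d) := (ENNReal.ofReal_mul hM₁0).symm
            _ = ENNReal.ofReal (A₁ * d^(2*δ)) := by
                congr 1
                calc M₁ * d = (C₁ * ((3+κ)/2)^(2*ν) * (c1^2)^(δ-1-ν)) *
                      (d^(2*ν) * d^(2*(δ-1-ν)) * d * d) := by rw [hM₁def, hd2e]; ring
                  _ = A₁ * d^(2*δ) := by rw [hcollect, hA₁def]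
        have hI2 : ∫⁻ x in Ioi Rr, w x * Gf x ≤ ENNReal.ofReal (A₂ * d^(2*δ)) := by
          have hb : ∀ᵐ x ∂(volume.restrict (Ioi Rr)),
              w x * Gf x ≤ ENNReal.ofReal (M₂ * x^p) := by
            filter_upwards [ae_restrict_mem measurableSet_Ioi] with x hx
            have hx0 : 0 < x := lt_trans hR0 hx
            rw [hwdef, hGfdef]
            simp only []
            rw [← ENNReal.ofReal_mul (Real.rpow_nonneg hx0.le _)]
            apply ENNReal.ofReal_le_ofReal
            have hεx : ε * x ≤ x - y := by
              rw [hεdef, div_mul_eq_mul_div, div_le_iff₀ hden]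
              have hxR : (3+κ^2)/2*d ≤ x := by rw [← hRdef]; exact le_of_lt hx
              have hA := mul_le_mul_of_nonneg_left hyub (by positivity : (0:ℝ) ≤ 3+κ^2)
              have hB := mul_le_mul_of_nonneg_left hxR (by positivity : (0:ℝ) ≤ 3+κ)
              linarith [hA, hB]
            have hgb : ((x-y)^2)^(δ-1-ν) ≤ (ε^2)^(δ-1-ν) * (x^2)^(δ-1-ν) := by
              rw [← Real.mul_rpow (by positivity) (by positivity)]
              apply Real.rpow_le_rpow_of_nonpos (by positivity) _ (by linarith)
              calc ε^2*x^2 = (ε*x)^2 := by ring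
                _ ≤ (x-y)^2 := pow_le_pow_left₀ (by positivity) hεx 2
            have hx2e : ((x^2 : ℝ))^(δ-1-ν) = x^(2*(δ-1-ν)) := by
              rw [← Real.rpow_natCast x 2, ← Real.rpow_mul hx0.le]
              norm_num
            have hxcollect : x^(2*(δ-1-ν)) * (x^(2*ν+1) * x^(-(2*ν))) = x^p := by
              rw [← Real.rpow_add hx0, ← Real.rpow_add hx0]
              congr 1
              rw [hpdef]; ring
            calc x^(2*ν+1) * (C₁ * (y^(2*ν) * x^(-(2*ν)) * ((x-y)^2)^(δ-1-ν)))
                = C₁ * y^(2*ν) * ((x-y)^2)^(δ-1-ν) * (x^(2*ν+1) * x^(-(2*ν))) := by ring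
              _ ≤ C₁ * (((3+κ)/2)^(2*ν) * d^(2*ν)) * ((ε^2)^(δ-1-ν) * (x^2)^(δ-1-ν)) *
                    (x^(2*ν+1) * x^(-(2*ν))) := by
                  gcongr <;> first | exact hyb | exact hgb
              _ = M₂ * (x^(2*(δ-1-ν)) * (x^(2*ν+1) * x^(-(2*ν)))) := by
                  rw [hM₂def, hx2e]; ring
              _ = M₂ * x^p := by rw [hxcollect]
          have hmerge : d^(2*ν) * d^(2*δ-2*ν) = d^(2*δ) := by
            rw [hdpow]; congr 1; ring
          calc ∫⁻ x in Ioi Rr, w x * Gf x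
              ≤ ∫⁻ x in Ioi Rr, ENNReal.ofReal (M₂ * x^p) := lintegral_mono_ae hb
            _ = ∫⁻ x in Ioi Rr, ENNReal.ofReal M₂ * ENNReal.ofReal (x^p) := by
                simp_rw [ENNReal.ofReal_mul hM₂0]
            _ = ENNReal.ofReal M₂ * ∫⁻ x in Ioi Rr, ENNReal.ofReal (x^p) :=
                lintegral_const_mul' _ _ ENNReal.ofReal_ne_top
            _ = ENNReal.ofReal M₂ * ENNReal.ofReal (∫ x in Ioi Rr, x^p) := by
                rw [← ofReal_integral_eq_lintegral_ofReal
                  (integrableOn_Ioi_rpow_of_lt hp hR0)]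
                filter_upwards [ae_restrict_mem measurableSet_Ioi] with x hx
                exact Real.rpow_nonneg (le_of_lt (lt_trans hR0 hx)) p
            _ = ENNReal.ofReal (M₂ * (-Rr^(p+1)/(p+1))) := by
                rw [integral_Ioi_rpow_of_lt hp hR0, ← ENNReal.ofReal_mul hM₂0]
            _ = ENNReal.ofReal (A₂ * d^(2*δ)) := by
                congr 1
                have hp1 : p + 1 = 2*δ-2*ν := by rw [hpdef]; ring
                have hRp : Rr^(p+1) = ((3+κ^2)/2)^(2*δ-2*ν) * d^(2*δ-2*ν) := by
                  rw [hp1, hRdef, Real.mul_rpow (by positivity) hd.le]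
                rw [hRp, hp1, hM₂def, hA₂def, ← hmerge]
                have hne' : (2*δ-2*ν) ≠ 0 := by intro h; linarith
                field_simp
                ring_nf
                rw [neg_inv]
                ring_nf
        exact add_le_add hI1 hI2
    _ = ENNReal.ofReal ((A₁ + A₂) * d^(2*δ)) := by
        rw [← ENNReal.ofReal_add (by positivity) (by positivity)]
        congr 1
        ring
end
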